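/- arXiv:1812.04276 — 9 statements merged into one kernel-verified Lean document; each statement's English description precedes it below -/
import Mathlib

section
/- Let a ∈ ℝⁿ \ {0}, b ∈ ℝ, γ > 0, μ > 0, and let B(u) = −ln(b − aᵀu) if aᵀu < b and B(u) = +∞ otherwise. Then for every x ∈ ℝⁿ, the unique minimizer over u ∈ ℝⁿ of (1/2)‖x − u‖² + γμ B(u) is φ(x, μ, γ) = x + ((b − aᵀx − √((b − aᵀx)² + 4γμ‖a‖²)) / (2‖a‖²)) a. -/
open scoped InnerProductSpace

/-- Logarithmic barrier of the half-space `{u : ⟪a,u⟫ ≤ b}`. -/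
noncomputable def affineBarrier {n : ℕ} (a : EuclideanSpace ℝ (Fin n)) (b : ℝ)
    (u : EuclideanSpace ℝ (Fin n)) : EReal :=
  if ⟪a, u⟫_ℝ < b then ((- Real.log (b - ⟪a, u⟫_ℝ) : ℝ) : EReal) else ⊤

/-- The objective `u ↦ (1/2)‖x-u‖² + γμ B(u)` defining `prox_{γμB}(x)`. -/
noncomputable def affineProxObj {n : ℕ} (a : EuclideanSpace ℝ (Fin n)) (b γ μ : ℝ)
    (x u : EuclideanSpace ℝ (Fin n)) : EReal :=
  ((1 / 2 * ‖x - u‖ ^ 2 : ℝ) : EReal) + ((γ * μ : ℝ) : EReal) * affineBarrier a b u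

set_option maxHeartbeats 1000000 in
theorem affine_barrier_prox {n : ℕ} (a : EuclideanSpace ℝ (Fin n)) (ha : a ≠ 0)
    (b γ μ : ℝ) (hγ : 0 < γ) (hμ : 0 < μ) (x : EuclideanSpace ℝ (Fin n)) :
    ∀ u : EuclideanSpace ℝ (Fin n),
      u ≠ x + (((b - ⟪a, x⟫_ℝ) -
          Real.sqrt ((b - ⟪a, x⟫_ℝ) ^ 2 + 4 * γ * μ * ‖a‖ ^ 2)) / (2 * ‖a‖ ^ 2)) • a →
      affineProxObj a b γ μ x
          (x + (((b - ⟪a, x⟫_ℝ) -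
            Real.sqrt ((b - ⟪a, x⟫_ℝ) ^ 2 + 4 * γ * μ * ‖a‖ ^ 2)) / (2 * ‖a‖ ^ 2)) • a)
        < affineProxObj a b γ μ x u := by
  intro u hu
  have hA : (0:ℝ) < ‖a‖ ^ 2 := by
    have : 0 < ‖a‖ := norm_pos_iff.mpr ha
    positivity
  set A : ℝ := ‖a‖ ^ 2 with hA_def
  set s : ℝ := b - ⟪a, x⟫_ℝ with hs_def
  have hlam : (0:ℝ) < γ * μ := mul_pos hγ hμ
  have hDsq : (0:ℝ) < s ^ 2 + 4 * γ * μ * A := by nlinarith [sq_nonneg s]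
  set D : ℝ := Real.sqrt (s ^ 2 + 4 * γ * μ * A) with hD_def
  have hD2 : D ^ 2 = s ^ 2 + 4 * γ * μ * A := Real.sq_sqrt hDsq.le
  have hDnn : 0 ≤ D := Real.sqrt_nonneg _
  have hsD : -s < D := by nlinarith
  have hsD' : s < D := by nlinarith
  set t : ℝ := (s - D) / (2 * A) with ht_def
  set rs : ℝ := (s - D) / 2 with hrs_def
  set v : EuclideanSpace ℝ (Fin n) := x + t • a with hv_def
  have htA : t * A = rs := by
    rw [ht_def, hrs_def]; field_simp
  have hinner_v : ⟪a, v⟫_ℝ = ⟪a, x⟫_ℝ + rs := by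
    rw [hv_def, inner_add_right, real_inner_smul_right, real_inner_self_eq_norm_sq, ← hA_def,
      htA]
  have hrs_neg : rs < 0 := by rw [hrs_def]; linarith
  have hsrs : s - rs = (s + D) / 2 := by rw [hrs_def]; ring
  have hsrs_pos : 0 < s - rs := by rw [hsrs]; linarith
  have hv_lt : ⟪a, v⟫_ℝ < b := by rw [hinner_v]; rw [hs_def] at hsrs_pos; linarith
  have hbv : b - ⟪a, v⟫_ℝ = s - rs := by rw [hinner_v, hs_def]; ring
  -- key algebraic identity for the optimality condition
  have hkey : rs * (s - rs) = -(γ * μ * A) := by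
    rw [hrs_def]; nlinarith [hD2]
  -- the value at v is a real number
  have hval_v : affineProxObj a b γ μ x v
      = ((1 / 2 * ‖x - v‖ ^ 2 + γ * μ * (- Real.log (s - rs)) : ℝ) : EReal) := by
    rw [affineProxObj, affineBarrier, if_pos hv_lt, hbv]
    norm_cast
  clear_value D
  have hnormv : ‖x - v‖ ^ 2 = rs ^ 2 / A := by
    have : x - v = (-t) • a := by rw [hv_def]; module
    rw [this, norm_smul]
    rw [mul_pow, ← hA_def, ht_def]
    rw [Real.norm_eq_abs, sq_abs]
    field_simp [hrs_def]
    ring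
  clear_value A s t rs v
  by_cases hub : ⟪a, u⟫_ℝ < b
  · -- finite case
    set r : ℝ := ⟪a, u⟫_ℝ - ⟪a, x⟫_ℝ with hr_def
    have hsr_pos : 0 < s - r := by rw [hs_def, hr_def]; linarith
    have hbu : b - ⟪a, u⟫_ℝ = s - r := by rw [hs_def, hr_def]; ring
    have hval_u : affineProxObj a b γ μ x u
        = ((1 / 2 * ‖x - u‖ ^ 2 + γ * μ * (- Real.log (s - r)) : ℝ) : EReal) := by
      rw [affineProxObj, affineBarrier, if_pos hub, hbu]
      norm_cast
    rw [hval_v, hval_u, EReal.coe_lt_coe_iff]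
    -- orthogonal decomposition of u - x
    set w : EuclideanSpace ℝ (Fin n) := u - x - (r / A) • a with hw_def
    have hwa : ⟪a, w⟫_ℝ = 0 := by
      rw [hw_def, inner_sub_right, inner_sub_right, real_inner_smul_right,
        real_inner_self_eq_norm_sq, ← hA_def]
      field_simp [hr_def]
      linarith [hr_def]
    have hnormu : ‖x - u‖ ^ 2 = ‖w‖ ^ 2 + r ^ 2 / A := by
      have h1 : x - u = -(w + (r / A) • a) := by rw [hw_def]; module
      rw [h1, norm_neg, norm_add_sq_real, real_inner_smul_right, real_inner_comm, hwa,
        norm_smul, mul_pow, Real.norm_eq_abs, sq_abs, ← hA_def]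
      field_simp
      ring
    clear_value r w
    rw [hnormv, hnormu]
    by_cases hr : r = rs
    · -- same inner product: need w ≠ 0
      have hw0 : w ≠ 0 := by
        intro h
        apply hu
        have hu_eq : u = x + (r / A) • a := by
          have := h
          rw [hw_def] at this
          have : u - x = (r / A) • a := by
            have h2 : u - x - (r / A) • a = 0 := this
            linear_combination (norm := module) h2
          linear_combination (norm := module) this
        rw [hu_eq, hr, hv_def, ht_def, hrs_def]
        congr 1
        ring
      have hwpos : 0 < ‖w‖ ^ 2 := pow_pos (norm_pos_iff.mpr hw0) 2
      rw [hr]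
      linarith
    · -- different inner products: strict convexity via log x < x - 1
      have hy_pos : 0 < (s - r) / (s - rs) := div_pos hsr_pos hsrs_pos
      have hy_ne : (s - r) / (s - rs) ≠ 1 := by
        intro h
        rw [div_eq_one_iff_eq (ne_of_gt hsrs_pos)] at h
        exact hr (by linarith)
      have hlog := Real.log_lt_sub_one_of_pos hy_pos hy_ne
      rw [Real.log_div (ne_of_gt hsr_pos) (ne_of_gt hsrs_pos)] at hlog
      -- λ (log(s-r) - log(s-rs)) < λ ((s-r)/(s-rs) - 1) = rs (r - rs)/A
      have h1 : γ * μ * Real.log (s - r) - γ * μ * Real.log (s - rs)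
          < rs * (r - rs) / A := by
        have h2 : γ * μ * Real.log (s - r) - γ * μ * Real.log (s - rs)
            < γ * μ * ((s - r) / (s - rs) - 1) := by
          have := (mul_lt_mul_iff_right₀ hlam).mpr hlog
          linarith [mul_sub (γ * μ) (Real.log (s - r)) (Real.log (s - rs))]
        have h3 : γ * μ * ((s - r) / (s - rs) - 1) = rs * (r - rs) / A := by
          have hs' : s - rs ≠ 0 := ne_of_gt hsrs_pos
          have hA' : A ≠ 0 := ne_of_gt hA
          have he : (s - r) / (s - rs) - 1 = (rs - r) / (s - rs) := by
            field_simp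
            ring
          rw [he, ← mul_div_assoc, div_eq_div_iff hs' hA']
          linear_combination (rs - r) * hkey
        linarith [h3 ▸ h2]
      have h2 : rs * (r - rs) / A ≤ (r ^ 2 - rs ^ 2) / (2 * A) := by
        rw [div_le_div_iff₀ hA (by linarith)]
        nlinarith [sq_nonneg (r - rs)]
      have hwnn : 0 ≤ ‖w‖ ^ 2 := sq_nonneg _
      have : (r ^ 2 - rs ^ 2) / (2 * A) = 1 / 2 * (r ^ 2 / A) - 1 / 2 * (rs ^ 2 / A) := by
        field_simp
      linarith [h1, h2, hwnn, this]
  · -- infinite case: objective is ⊤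
    have htop : affineProxObj a b γ μ x u = ⊤ := by
      rw [affineProxObj, affineBarrier, if_neg hub,
        EReal.coe_mul_top_of_pos (by exact_mod_cast hlam)]
      rfl
    rw [hval_v, htop]
    exact EReal.coe_lt_top _
end

section
/- Let a ∈ ℝⁿ \ {0}, b_m < b_M be reals, γ > 0, μ > 0, and x ∈ ℝⁿ. Then the cubic equation z³ − (b_m + b_M + aᵀx) z² + (b_m b_M + aᵀx (b_m + b_M) − 2γμ‖a‖²) z − b_m b_M aᵀx + γμ (b_m + b_M)‖a‖² = 0 has exactly one solution z in the open interval (b_m, b_M). -/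
open scoped InnerProductSpace

theorem hyperslab_cubic_unique_root {n : ℕ} (a : EuclideanSpace ℝ (Fin n)) (ha : a ≠ 0)
    (bm bM : ℝ) (hb : bm < bM) (γ μ : ℝ) (hγ : 0 < γ) (hμ : 0 < μ)
    (x : EuclideanSpace ℝ (Fin n)) :
    ∃! z : ℝ, z ∈ Set.Ioo bm bM ∧
      z ^ 3 - (bm + bM + ⟪a, x⟫_ℝ) * z ^ 2 +
        (bm * bM + ⟪a, x⟫_ℝ * (bm + bM) - 2 * γ * μ * ‖a‖ ^ 2) * z -
        bm * bM * ⟪a, x⟫_ℝ + γ * μ * (bm + bM) * ‖a‖ ^ 2 = 0 := by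
  have hna : 0 < ‖a‖ := norm_pos_iff.mpr ha
  have hc : 0 < γ * μ * ‖a‖ ^ 2 := by positivity
  set s : ℝ := ⟪a, x⟫_ℝ with hs
  set f : ℝ → ℝ := fun z => z ^ 3 - (bm + bM + s) * z ^ 2 +
      (bm * bM + s * (bm + bM) - 2 * γ * μ * ‖a‖ ^ 2) * z -
      bm * bM * s + γ * μ * (bm + bM) * ‖a‖ ^ 2 with hf
  have hcont : ContinuousOn f (Set.Icc bm bM) := by
    apply Continuous.continuousOn
    fun_prop
  have hfbm : f bm = γ * μ * ‖a‖ ^ 2 * (bM - bm) := by simp only [hf]; ring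
  have hfbM : f bM = -(γ * μ * ‖a‖ ^ 2 * (bM - bm)) := by simp only [hf]; ring
  have h0 : (0 : ℝ) ∈ Set.Ioo (f bM) (f bm) := by
    rw [hfbm, hfbM]
    constructor <;> nlinarith
  obtain ⟨z, hz, hfz⟩ := intermediate_value_Ioo' hb.le hcont h0
  have huniq : ∀ w z : ℝ, w ∈ Set.Ioo bm bM → z ∈ Set.Ioo bm bM →
      f w = 0 → f z = 0 → w = z := by
    intro w z hw hz hfw hfz
    simp only [hf] at hfw hfz
    have hA : 0 < (w - bm) * (z - bm) :=
      mul_pos (by linarith [hw.1]) (by linarith [hz.1])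
    have hB : 0 < (w - bM) * (z - bM) :=
      mul_pos_of_neg_of_neg (by linarith [hw.2]) (by linarith [hz.2])
    have key : (w - z) * ((w - bm) * (z - bm) * ((w - bM) * (z - bM)) +
        γ * μ * ‖a‖ ^ 2 * ((w - bM) * (z - bM) + (w - bm) * (z - bm))) = 0 := by
      linear_combination (z - bm) * (z - bM) * hfw - (w - bm) * (w - bM) * hfz
    have hpos : 0 < (w - bm) * (z - bm) * ((w - bM) * (z - bM)) +
        γ * μ * ‖a‖ ^ 2 * ((w - bM) * (z - bM) + (w - bm) * (z - bm)) := by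
      have := mul_pos hA hB
      nlinarith
    have := mul_eq_zero.mp key
    rcases this with h | h
    · linarith
    · exact absurd h (ne_of_gt hpos)
  exact ⟨z, ⟨hz, hfz⟩, fun w ⟨hw, hfw⟩ => huniq w z hw hz hfw hfz⟩
end

section
/- Let a ∈ ℝⁿ \ {0}, b_m < b_M be reals, γ > 0, μ > 0. For x ∈ ℝⁿ, let κ(x, μ, γ) be the unique solution in (b_m, b_M) of z³ − (b_m + b_M + aᵀx) z² + (b_m b_M + aᵀx (b_m + b_M) − 2γμ‖a‖²) z − b_m b_M aᵀx + γμ (b_m + b_M)‖a‖² = 0, let η(x, μ, γ) = (b_M − κ(x, μ, γ))(b_m − κ(x, μ, γ)) − (b_m + b_M − 2κ(x, μ, γ))(κ(x, μ, γ) − aᵀx) − 2γμ‖a‖², and let φ(x, μ, γ) = x + ((κ(x, μ, γ) − aᵀx)/‖a‖²) a. Then the map x′ ↦ φ(x′, μ, γ) is differentiable at every x ∈ ℝⁿ and its Jacobian matrix equals Iₙ + (1/‖a‖²) · ((b_M − κ(x, μ, γ))(b_m − κ(x, μ, γ))/η(x, μ, γ) − 1) · a aᵀ. -/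
open scoped InnerProductSpace

private lemma key_alg (bm bM z t γ μ A : ℝ) (h1 : bm < z) (h2 : z < bM)
    (hγ : 0 < γ) (hμ : 0 < μ) (hA : 0 < A)
    (hrel : (z - t) * ((bM - z) * (z - bm)) = γ * μ * A * ((bM - z) - (z - bm))) :
    (bM - z) * (bm - z) /
        ((bM - z) * (bm - z) - (bm + bM - 2 * z) * (z - t) - 2 * γ * μ * A)
      = (1 + γ * μ * A * (((bM - z) ^ 2)⁻¹ + ((z - bm) ^ 2)⁻¹))⁻¹ := by
  have hP : 0 < bM - z := sub_pos.mpr h2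
  have hQ : 0 < z - bm := sub_pos.mpr h1
  have hS : 0 < 1 + γ * μ * A * (((bM - z) ^ 2)⁻¹ + ((z - bm) ^ 2)⁻¹) := by positivity
  have hzt : z - t = γ * μ * A * ((bM - z) - (z - bm)) / ((bM - z) * (z - bm)) := by
    rw [eq_div_iff (by positivity)]; exact hrel
  have hη : (bM - z) * (bm - z) - (bm + bM - 2 * z) * (z - t) - 2 * γ * μ * A
      = -((1 + γ * μ * A * (((bM - z) ^ 2)⁻¹ + ((z - bm) ^ 2)⁻¹)) * ((bM - z) * (z - bm))) := by
    rw [hzt]; field_simp; ring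
  rw [hη, show (bM - z) * (bm - z) = -((bM - z) * (z - bm)) by ring, neg_div_neg_eq,
    div_eq_iff (by positivity), inv_mul_cancel_left₀ hS.ne']

theorem hyperslab_prox_jacobian {n : ℕ} (a : EuclideanSpace ℝ (Fin n)) (ha : a ≠ 0)
    (bm bM : ℝ) (hb : bm < bM) (γ μ : ℝ) (hγ : 0 < γ) (hμ : 0 < μ)
    (κ : EuclideanSpace ℝ (Fin n) → ℝ)
    (hκ : ∀ x : EuclideanSpace ℝ (Fin n), κ x ∈ Set.Ioo bm bM ∧
      (κ x) ^ 3 - (bm + bM + ⟪a, x⟫_ℝ) * (κ x) ^ 2 +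
        (bm * bM + ⟪a, x⟫_ℝ * (bm + bM) - 2 * γ * μ * ‖a‖ ^ 2) * (κ x) -
        bm * bM * ⟪a, x⟫_ℝ + γ * μ * (bm + bM) * ‖a‖ ^ 2 = 0) :
    ∀ x : EuclideanSpace ℝ (Fin n),
      HasFDerivAt (fun x' => x' + ((κ x' - ⟪a, x'⟫_ℝ) / ‖a‖ ^ 2) • a)
        (ContinuousLinearMap.id ℝ (EuclideanSpace ℝ (Fin n)) +
          (1 / ‖a‖ ^ 2 *
              ((bM - κ x) * (bm - κ x) /
                  ((bM - κ x) * (bm - κ x) -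
                    (bm + bM - 2 * κ x) * (κ x - ⟪a, x⟫_ℝ) - 2 * γ * μ * ‖a‖ ^ 2) - 1)) •
            (innerSL ℝ a).smulRight a) x := by
  have hA : (0:ℝ) < ‖a‖ ^ 2 := by
    have : ‖a‖ ≠ 0 := norm_ne_zero_iff.mpr ha
    positivity
  set f : ℝ → ℝ := fun z => z + γ * μ * ‖a‖ ^ 2 * ((bM - z)⁻¹ - (z - bm)⁻¹) with hf
  -- strict derivative of f at interior points
  have hstrict : ∀ z : ℝ, bM - z ≠ 0 → z - bm ≠ 0 →
      HasStrictDerivAt f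
        (1 + γ * μ * ‖a‖ ^ 2 * (((bM - z) ^ 2)⁻¹ + ((z - bm) ^ 2)⁻¹)) z := by
    intro z h1 h2
    have d1 : HasStrictDerivAt (fun z : ℝ => (bM - z)⁻¹) (((bM - z) ^ 2)⁻¹) z := by
      have := (hasStrictDerivAt_inv h1).comp z ((hasStrictDerivAt_id z).const_sub bM)
      exact this.congr_deriv (by ring)
    have d2 : HasStrictDerivAt (fun z : ℝ => (z - bm)⁻¹) (-(((z - bm) ^ 2)⁻¹)) z := by
      have := (hasStrictDerivAt_inv h2).comp z ((hasStrictDerivAt_id z).sub_const bm)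
      exact this.congr_deriv (by ring)
    have := (hasStrictDerivAt_id z).add (((d1.sub d2)).const_mul (γ * μ * ‖a‖ ^ 2))
    exact this.congr_deriv (by ring)
  -- monotonicity of f on (bm, bM)
  have hmono : StrictMonoOn f (Set.Ioo bm bM) := by
    apply strictMonoOn_of_deriv_pos (convex_Ioo bm bM)
    · intro z hz
      exact ((hstrict z (sub_ne_zero.mpr hz.2.ne') (sub_ne_zero.mpr (ne_of_gt hz.1))).hasDerivAt.continuousAt).continuousWithinAt
    · intro z hz
      rw [interior_Ioo] at hz
      rw [((hstrict z (sub_ne_zero.mpr hz.2.ne') (sub_ne_zero.mpr (ne_of_gt hz.1))).hasDerivAt).deriv]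
      positivity
  -- κ y is a root : f (κ y) = ⟪a, y⟫
  have hroot : ∀ y : EuclideanSpace ℝ (Fin n), f (κ y) = ⟪a, y⟫_ℝ := by
    intro y
    obtain ⟨hm, hc⟩ := hκ y
    have h1 : (0:ℝ) < bM - κ y := sub_pos.mpr hm.2
    have h2 : (0:ℝ) < κ y - bm := sub_pos.mpr hm.1
    have key : (κ y - ⟪a, y⟫_ℝ) * ((bM - κ y) * (κ y - bm))
        = γ * μ * ‖a‖ ^ 2 * ((bM - κ y) - (κ y - bm)) := by
      linear_combination -hc
    have i1 : (bM - κ y) * (bM - κ y)⁻¹ = 1 := mul_inv_cancel₀ h1.ne'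
    have i2 : (κ y - bm) * (κ y - bm)⁻¹ = 1 := mul_inv_cancel₀ h2.ne'
    have hprod : (κ y + γ * μ * ‖a‖ ^ 2 * ((bM - κ y)⁻¹ - (κ y - bm)⁻¹) - ⟪a, y⟫_ℝ) *
        ((bM - κ y) * (κ y - bm)) = 0 := by
      linear_combination key + (γ * μ * ‖a‖ ^ 2 * (κ y - bm)) * i1 -
        (γ * μ * ‖a‖ ^ 2 * (bM - κ y)) * i2
    rcases mul_eq_zero.mp hprod with h' | h'
    · show κ y + γ * μ * ‖a‖ ^ 2 * ((bM - κ y)⁻¹ - (κ y - bm)⁻¹) = ⟪a, y⟫_ℝ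
      linarith
    · exact absurd h' (by positivity)
  intro x
  obtain ⟨hz0mem, hcube⟩ := hκ x
  have h1 : (0:ℝ) < bM - κ x := sub_pos.mpr hz0mem.2
  have h2 : (0:ℝ) < κ x - bm := sub_pos.mpr hz0mem.1
  set D' : ℝ := 1 + γ * μ * ‖a‖ ^ 2 * (((bM - κ x) ^ 2)⁻¹ + ((κ x - bm) ^ 2)⁻¹) with hD'
  have hD'pos : 0 < D' := by rw [hD']; positivity
  have hs : HasStrictDerivAt f D' (κ x) := hstrict (κ x) h1.ne' h2.ne'
  -- local inverse g
  set g : ℝ → ℝ := hs.localInverse f D' (κ x) hD'pos.ne' with hg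
  have hgd : HasStrictDerivAt g D'⁻¹ (f (κ x)) := hs.to_localInverse hD'pos.ne'
  have hgcont : ContinuousAt g (f (κ x)) :=
    (hs.hasStrictFDerivAt_equiv hD'pos.ne').localInverse_continuousAt
  have hgx : g (f (κ x)) = κ x :=
    (hs.hasStrictFDerivAt_equiv hD'pos.ne').localInverse_apply_image
  have hright : ∀ᶠ t in nhds (f (κ x)), f (g t) = t :=
    (hs.hasStrictFDerivAt_equiv hD'pos.ne').eventually_right_inverse
  rw [hroot x] at hgd hgcont hgx hright
  have hinner_cont : ContinuousAt (fun x' : EuclideanSpace ℝ (Fin n) => ⟪a, x'⟫_ℝ) x :=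
    (innerSL ℝ a).continuous.continuousAt
  have hEoo : ∀ᶠ x' in nhds x, g ⟪a, x'⟫_ℝ ∈ Set.Ioo bm bM := by
    have h' : ∀ᶠ t in nhds (⟪a, x⟫_ℝ), g t ∈ Set.Ioo bm bM := by
      apply hgcont.eventually_mem
      rw [hgx]
      exact isOpen_Ioo.mem_nhds hz0mem
    exact hinner_cont.eventually h'
  have hEright : ∀ᶠ x' in nhds x, f (g ⟪a, x'⟫_ℝ) = ⟪a, x'⟫_ℝ :=
    hinner_cont.eventually hright
  have heq : (fun x' => g ⟪a, x'⟫_ℝ) =ᶠ[nhds x] κ := by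
    filter_upwards [hEoo, hEright] with x' hmem hfg
    exact hmono.injOn hmem (hκ x').1 (by rw [hfg, hroot x'])
  have hκd : HasFDerivAt κ (D'⁻¹ • (innerSL ℝ a : EuclideanSpace ℝ (Fin n) →L[ℝ] ℝ)) x := by
    have hcomp : HasFDerivAt (fun x' => g ⟪a, x'⟫_ℝ)
        (D'⁻¹ • (innerSL ℝ a : EuclideanSpace ℝ (Fin n) →L[ℝ] ℝ)) x :=
      hgd.hasDerivAt.comp_hasFDerivAt x ((innerSL ℝ a).hasFDerivAt)
    exact hcomp.congr_of_eventuallyEq heq.symm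
  -- assemble
  have hfun : (fun x' : EuclideanSpace ℝ (Fin n) => x' + ((κ x' - ⟪a, x'⟫_ℝ) / ‖a‖ ^ 2) • a)
      = fun x' => x' + (κ x' - ⟪a, x'⟫_ℝ) • ((‖a‖ ^ 2)⁻¹ • a) := by
    funext x'
    rw [div_eq_mul_inv, mul_smul]
  rw [hfun]
  have hd1 := (hκd.sub ((innerSL ℝ a).hasFDerivAt (x := x))).smul_const ((‖a‖ ^ 2)⁻¹ • a)
  have hd2 := (hasFDerivAt_id x).add hd1
  have hrel : (κ x - ⟪a, x⟫_ℝ) * ((bM - κ x) * (κ x - bm))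
      = γ * μ * ‖a‖ ^ 2 * ((bM - κ x) - (κ x - bm)) := by
    linear_combination -hcube
  have hkey : (bM - κ x) * (bm - κ x) /
      ((bM - κ x) * (bm - κ x) - (bm + bM - 2 * κ x) * (κ x - ⟪a, x⟫_ℝ)
        - 2 * γ * μ * ‖a‖ ^ 2) = D'⁻¹ := by
    rw [hD']
    exact key_alg bm bM (κ x) ⟪a, x⟫_ℝ γ μ (‖a‖ ^ 2) hz0mem.1 hz0mem.2 hγ hμ hA hrel
  have hCLM : (ContinuousLinearMap.id ℝ (EuclideanSpace ℝ (Fin n)) +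
      (1 / ‖a‖ ^ 2 * (D'⁻¹ - 1)) • (innerSL ℝ a).smulRight a)
      = (ContinuousLinearMap.id ℝ (EuclideanSpace ℝ (Fin n)) +
        (D'⁻¹ • (innerSL ℝ a : EuclideanSpace ℝ (Fin n) →L[ℝ] ℝ) -
          innerSL ℝ a).smulRight ((‖a‖ ^ 2)⁻¹ • a)) := by
    refine ContinuousLinearMap.ext fun v => ?_
    simp only [ContinuousLinearMap.add_apply, ContinuousLinearMap.coe_id', id_eq,
      ContinuousLinearMap.coe_smul', Pi.smul_apply, ContinuousLinearMap.smulRight_apply,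
      ContinuousLinearMap.coe_sub', Pi.sub_apply, smul_eq_mul, smul_smul]
    congr 1
    ring
  rw [hkey, hCLM]
  exact hd2
end

section
/- Let a ∈ ℝⁿ \ {0}, b_m < b_M be reals, x ∈ ℝⁿ. For γ > 0 and μ > 0, let κ(x, μ, γ) be the unique solution in (b_m, b_M) of z³ − (b_m + b_M + aᵀx) z² + (b_m b_M + aᵀx (b_m + b_M) − 2γμ‖a‖²) z − b_m b_M aᵀx + γμ (b_m + b_M)‖a‖² = 0, let η(x, μ, γ) = (b_M − κ(x, μ, γ))(b_m − κ(x, μ, γ)) − (b_m + b_M − 2κ(x, μ, γ))(κ(x, μ, γ) − aᵀx) − 2γμ‖a‖², and let φ(x, μ, γ) = x + ((κ(x, μ, γ) − aᵀx)/‖a‖²) a. Then φ(x, ·, ·) is differentiable on (0, +∞)², with ∂φ/∂μ (x, μ, γ) = (−γ (b_m + b_M − 2κ(x, μ, γ)) / η(x, μ, γ)) a and ∂φ/∂γ (x, μ, γ) = (−μ (b_m + b_M − 2κ(x, μ, γ)) / η(x, μ, γ)) a. -/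
open scoped InnerProductSpace
open Filter Topology

private lemma eta_neg' {bm bM c z t : ℝ} (h1 : bm < z) (h2 : z < bM) (ht : 0 < t)
    (heq : (z - bm) * (z - bM) * (z - c) + t * (bm + bM - 2 * z) = 0) :
    (bM - z) * (bm - z) - (bm + bM - 2 * z) * (z - c) - 2 * t < 0 := by
  have p1 : 0 < t * ((bM - z) * (z - bm)) :=
    mul_pos ht (mul_pos (by linarith) (by linarith))
  have p2 : 0 ≤ (z - bm) * (bM - z) * (z - c) ^ 2 :=
    mul_nonneg (mul_nonneg (by linarith) (by linarith)) (sq_nonneg _)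
  have hmul : t * ((bM - z) * (bm - z) - (bm + bM - 2 * z) * (z - c) - 2 * t)
      = -(t * ((bM - z) * (z - bm))) - (z - bm) * (bM - z) * (z - c) ^ 2 - 2 * t ^ 2 := by
    linear_combination (-(z - c)) * heq
  by_contra hcon
  push_neg at hcon
  have h0 : 0 ≤ t * ((bM - z) * (bm - z) - (bm + bM - 2 * z) * (z - c) - 2 * t) :=
    mul_nonneg ht.le hcon
  nlinarith [sq_nonneg t]

private lemma root_uniq {bm bM c z₁ z₂ t : ℝ} (ht : 0 < t)
    (hz₁ : z₁ ∈ Set.Ioo bm bM) (hz₂ : z₂ ∈ Set.Ioo bm bM)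
    (he₁ : (z₁ - bm) * (z₁ - bM) * (z₁ - c) + t * (bm + bM - 2 * z₁) = 0)
    (he₂ : (z₂ - bm) * (z₂ - bM) * (z₂ - c) + t * (bm + bM - 2 * z₂) = 0) :
    z₁ = z₂ := by
  by_contra hne
  have hη₁ := eta_neg' hz₁.1 hz₁.2 ht he₁
  have hη₂ := eta_neg' hz₂.1 hz₂.2 ht he₂
  have key : (z₁ - z₂) * ((((bM - z₁) * (bm - z₁) - (bm + bM - 2 * z₁) * (z₁ - c) - 2 * t)
      + ((bM - z₂) * (bm - z₂) - (bm + bM - 2 * z₂) * (z₂ - c) - 2 * t)) - (z₁ - z₂) ^ 2) = 0 := by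
    linear_combination 2 * he₁ - 2 * he₂
  have h0 : z₁ - z₂ ≠ 0 := sub_ne_zero.mpr hne
  have hkey := (mul_eq_zero.mp key).resolve_left h0
  nlinarith [sq_nonneg (z₁ - z₂)]

private lemma key_scalar (bm bM c A : ℝ) (hA : 0 < A) (k : ℝ → ℝ → ℝ)
    (hk : ∀ μ γ : ℝ, 0 < μ → 0 < γ → k μ γ ∈ Set.Ioo bm bM ∧
      (k μ γ - bm) * (k μ γ - bM) * (k μ γ - c) + (γ * μ * A) * (bm + bM - 2 * k μ γ) = 0)
    (μ γ : ℝ) (hμ : 0 < μ) (hγ : 0 < γ) :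
    DifferentiableAt ℝ (fun p : ℝ × ℝ => (k p.1 p.2 - c) / A) (μ, γ) ∧
    HasDerivAt (fun t : ℝ => (k t γ - c) / A)
      (-γ * (bm + bM - 2 * k μ γ) /
        ((bM - k μ γ) * (bm - k μ γ) - (bm + bM - 2 * k μ γ) * (k μ γ - c) - 2 * γ * μ * A)) μ ∧
    HasDerivAt (fun t : ℝ => (k μ t - c) / A)
      (-μ * (bm + bM - 2 * k μ γ) /
        ((bM - k μ γ) * (bm - k μ γ) - (bm + bM - 2 * k μ γ) * (k μ γ - c) - 2 * γ * μ * A)) γ := by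
  obtain ⟨hmem, heq⟩ := hk μ γ hμ hγ
  set κ₀ := k μ γ with hκ₀
  have ht₀ : 0 < γ * μ * A := mul_pos (mul_pos hγ hμ) hA
  have hη : (bM - κ₀) * (bm - κ₀) - (bm + bM - 2 * κ₀) * (κ₀ - c) - 2 * γ * μ * A < 0 := by
    have := eta_neg' hmem.1 hmem.2 ht₀ heq
    linarith
  have hηne : (bM - κ₀) * (bm - κ₀) - (bm + bM - 2 * κ₀) * (κ₀ - c) - 2 * γ * μ * A ≠ 0 :=
    ne_of_lt hη
  have hposev : ∀ᶠ p : ℝ × ℝ in 𝓝 (μ, γ), 0 < p.1 ∧ 0 < p.2 := by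
    have hop : IsOpen {p : ℝ × ℝ | 0 < p.1 ∧ 0 < p.2} :=
      (isOpen_lt continuous_const continuous_fst).inter (isOpen_lt continuous_const continuous_snd)
    exact hop.eventually_mem ⟨hμ, hγ⟩
  rcases eq_or_ne (bm + bM - 2 * κ₀) 0 with hD | hD
  · -- degenerate case: the root is constant
    have hC : (κ₀ - bm) * (κ₀ - bM) * (κ₀ - c) = 0 := by
      linear_combination heq - (γ * μ * A) * hD
    have hconst : ∀ μ' γ' : ℝ, 0 < μ' → 0 < γ' → k μ' γ' = κ₀ := by
      intro μ' γ' hμ' hγ'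
      obtain ⟨hm', he'⟩ := hk μ' γ' hμ' hγ'
      exact root_uniq (mul_pos (mul_pos hγ' hμ') hA) hm' hmem he'
        (by linear_combination hC + (γ' * μ' * A) * hD)
    have hzero : -γ * (bm + bM - 2 * κ₀) /
        ((bM - κ₀) * (bm - κ₀) - (bm + bM - 2 * κ₀) * (κ₀ - c) - 2 * γ * μ * A) = 0 := by
      rw [hD]; simp
    have hzero' : -μ * (bm + bM - 2 * κ₀) /
        ((bM - κ₀) * (bm - κ₀) - (bm + bM - 2 * κ₀) * (κ₀ - c) - 2 * γ * μ * A) = 0 := by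
      rw [hD]; simp
    refine ⟨?_, ?_, ?_⟩
    · exact (differentiableAt_const ((κ₀ - c) / A)).congr_of_eventuallyEq
        (hposev.mono fun p hp => by simp only [hconst p.1 p.2 hp.1 hp.2])
    · rw [hzero]
      refine (hasDerivAt_const μ ((κ₀ - c) / A)).congr_of_eventuallyEq ?_
      have h1 : ∀ᶠ t in 𝓝 μ, 0 < t := isOpen_Ioi.eventually_mem hμ
      exact h1.mono fun t htp => by simp only [hconst t γ htp hγ]
    · rw [hzero']
      refine (hasDerivAt_const γ ((κ₀ - c) / A)).congr_of_eventuallyEq ?_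
      have h1 : ∀ᶠ t in 𝓝 γ, 0 < t := isOpen_Ioi.eventually_mem hγ
      exact h1.mono fun t htp => by simp only [hconst μ t hμ htp]
  · -- main case: invert T z = -C z / D z
    have hCd : HasStrictDerivAt (fun z : ℝ => (z - bm) * (z - bM) * (z - c))
        ((1 * (κ₀ - bM) + (κ₀ - bm) * 1) * (κ₀ - c) + (κ₀ - bm) * (κ₀ - bM) * 1) κ₀ :=
      HasStrictDerivAt.mul
        (HasStrictDerivAt.mul ((hasStrictDerivAt_id κ₀).sub_const bm)
          ((hasStrictDerivAt_id κ₀).sub_const bM))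
        ((hasStrictDerivAt_id κ₀).sub_const c)
    have hDd : HasStrictDerivAt (fun z : ℝ => bm + bM - 2 * z) (-2 : ℝ) κ₀ := by
      simpa using ((hasStrictDerivAt_id κ₀).const_mul (2 : ℝ)).const_sub (bm + bM)
    have hT : HasStrictDerivAt
        (fun z : ℝ => -((z - bm) * (z - bM) * (z - c)) / (bm + bM - 2 * z))
        (-((bM - κ₀) * (bm - κ₀) - (bm + bM - 2 * κ₀) * (κ₀ - c) - 2 * γ * μ * A) /
          (bm + bM - 2 * κ₀)) κ₀ := by
      refine (hCd.neg.div hDd hD).congr_deriv ?_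
      simp only [Pi.neg_apply]
      rw [div_eq_div_iff (pow_ne_zero 2 hD) hD]
      linear_combination (-(2 * (bm + bM - 2 * κ₀))) * heq
    have hT'ne : -((bM - κ₀) * (bm - κ₀) - (bm + bM - 2 * κ₀) * (κ₀ - c) - 2 * γ * μ * A) /
        (bm + bM - 2 * κ₀) ≠ 0 := div_ne_zero (neg_ne_zero.mpr hηne) hD
    set g := hT.localInverse _ _ κ₀ hT'ne with hgdef
    have hTκ : -((κ₀ - bm) * (κ₀ - bM) * (κ₀ - c)) / (bm + bM - 2 * κ₀) = γ * μ * A := by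
      rw [div_eq_iff hD]
      linear_combination -heq
    have hg0 : g (γ * μ * A) = κ₀ := by
      have := (hT.hasStrictFDerivAt_equiv hT'ne).localInverse_apply_image
      rwa [hTκ] at this
    have hgd : HasDerivAt g
        ((-((bM - κ₀) * (bm - κ₀) - (bm + bM - 2 * κ₀) * (κ₀ - c) - 2 * γ * μ * A) /
          (bm + bM - 2 * κ₀))⁻¹) (γ * μ * A) := by
      have := (hT.to_localInverse hT'ne).hasDerivAt
      rwa [hTκ] at this
    have hrinv : ∀ᶠ y in 𝓝 (γ * μ * A),
        -((g y - bm) * (g y - bM) * (g y - c)) / (bm + bM - 2 * g y) = y := by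
      have := (hT.hasStrictFDerivAt_equiv hT'ne).eventually_right_inverse
      rwa [hTκ] at this
    have hgc : ContinuousAt g (γ * μ * A) := hgd.continuousAt
    have hgev : ∀ᶠ y in 𝓝 (γ * μ * A), g y ∈ Set.Ioo bm bM ∧ bm + bM - 2 * g y ≠ 0 := by
      have hop : IsOpen {z : ℝ | z ∈ Set.Ioo bm bM ∧ bm + bM - 2 * z ≠ 0} :=
        isOpen_Ioo.inter (isOpen_ne_fun (by fun_prop) continuous_const)
      have hmem' : g (γ * μ * A) ∈ {z : ℝ | z ∈ Set.Ioo bm bM ∧ bm + bM - 2 * z ≠ 0} := by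
        rw [hg0]; exact ⟨hmem, hD⟩
      exact hgc.eventually_mem (hop.mem_nhds hmem')
    have hevF : ∀ᶠ y in 𝓝 (γ * μ * A), g y ∈ Set.Ioo bm bM ∧
        (g y - bm) * (g y - bM) * (g y - c) + y * (bm + bM - 2 * g y) = 0 := by
      filter_upwards [hgev, hrinv] with y hy1 hy2
      refine ⟨hy1.1, ?_⟩
      rw [div_eq_iff hy1.2] at hy2
      linear_combination -hy2
    have hmc : ContinuousAt (fun p : ℝ × ℝ => p.2 * p.1 * A) (μ, γ) := by fun_prop
    have hPair : ∀ᶠ p : ℝ × ℝ in 𝓝 (μ, γ), k p.1 p.2 = g (p.2 * p.1 * A) := by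
      filter_upwards [hposev, hmc.tendsto.eventually hevF] with p hp hgp
      obtain ⟨hm', he'⟩ := hk p.1 p.2 hp.1 hp.2
      exact root_uniq (mul_pos (mul_pos hp.2 hp.1) hA) hm' hgp.1 he' hgp.2
    have hmd : DifferentiableAt ℝ (fun p : ℝ × ℝ => p.2 * p.1 * A) (μ, γ) := by fun_prop
    refine ⟨?_, ?_, ?_⟩
    · have hgm0 : DifferentiableAt ℝ (g ∘ (fun p : ℝ × ℝ => p.2 * p.1 * A)) (μ, γ) :=
        DifferentiableAt.comp (μ, γ) hgd.differentiableAt hmd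
      have hgm : DifferentiableAt ℝ (fun p : ℝ × ℝ => g (p.2 * p.1 * A)) (μ, γ) := hgm0
      have hcomp' : DifferentiableAt ℝ (fun p : ℝ × ℝ => (g (p.2 * p.1 * A) - c) * A⁻¹) (μ, γ) :=
        (hgm.sub_const c).mul_const A⁻¹
      have hcomp : DifferentiableAt ℝ (fun p : ℝ × ℝ => (g (p.2 * p.1 * A) - c) / A) (μ, γ) := by
        simpa only [div_eq_mul_inv] using hcomp'
      exact hcomp.congr_of_eventuallyEq (hPair.mono fun p hp => by simp only [hp])
    · have hin : HasDerivAt (fun t : ℝ => γ * t * A) (γ * A) μ := by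
        simpa using ((hasDerivAt_id μ).const_mul γ).mul_const A
      have h2 : HasDerivAt (fun t : ℝ => g (γ * t * A))
          ((-((bM - κ₀) * (bm - κ₀) - (bm + bM - 2 * κ₀) * (κ₀ - c) - 2 * γ * μ * A) /
            (bm + bM - 2 * κ₀))⁻¹ * (γ * A)) μ := by
        refine HasDerivAt.comp μ ?_ hin
        show HasDerivAt g _ (γ * μ * A)
        exact hgd
      have h3 := (h2.sub_const c).div_const A
      have hevEq : (fun t : ℝ => (k t γ - c) / A) =ᶠ[𝓝 μ]
          (fun t : ℝ => (g (γ * t * A) - c) / A) := by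
        have hc2 : ContinuousAt (fun t : ℝ => ((t, γ) : ℝ × ℝ)) μ := by fun_prop
        have hsl := hc2.tendsto.eventually hPair
        filter_upwards [hsl] with t ht
        simpa using congrArg (fun z => (z - c) / A) ht
      have hfin := h3.congr_of_eventuallyEq hevEq
      refine hfin.congr_deriv ?_
      have hAne : A ≠ 0 := ne_of_gt hA
      have hnegη : -((bM - κ₀) * (bm - κ₀) - (bm + bM - 2 * κ₀) * (κ₀ - c) - 2 * γ * μ * A) ≠ 0 :=
        neg_ne_zero.mpr hηne
      set E := (bM - κ₀) * (bm - κ₀) - (bm + bM - 2 * κ₀) * (κ₀ - c) - 2 * γ * μ * A with hE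
      rw [inv_div]
      field_simp
    · have hin : HasDerivAt (fun t : ℝ => t * μ * A) (μ * A) γ := by
        simpa using ((hasDerivAt_id γ).mul_const μ).mul_const A
      have h2 : HasDerivAt (fun t : ℝ => g (t * μ * A))
          ((-((bM - κ₀) * (bm - κ₀) - (bm + bM - 2 * κ₀) * (κ₀ - c) - 2 * γ * μ * A) /
            (bm + bM - 2 * κ₀))⁻¹ * (μ * A)) γ := by
        refine HasDerivAt.comp γ ?_ hin
        show HasDerivAt g _ (γ * μ * A)
        exact hgd
      have h3 := (h2.sub_const c).div_const A
      have hevEq : (fun t : ℝ => (k μ t - c) / A) =ᶠ[𝓝 γ]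
          (fun t : ℝ => (g (t * μ * A) - c) / A) := by
        have hc2 : ContinuousAt (fun t : ℝ => ((μ, t) : ℝ × ℝ)) γ := by fun_prop
        have hsl := hc2.tendsto.eventually hPair
        filter_upwards [hsl] with t ht
        simpa using congrArg (fun z => (z - c) / A) ht
      have hfin := h3.congr_of_eventuallyEq hevEq
      refine hfin.congr_deriv ?_
      have hAne : A ≠ 0 := ne_of_gt hA
      have hnegη : -((bM - κ₀) * (bm - κ₀) - (bm + bM - 2 * κ₀) * (κ₀ - c) - 2 * γ * μ * A) ≠ 0 :=
        neg_ne_zero.mpr hηne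
      set E := (bM - κ₀) * (bm - κ₀) - (bm + bM - 2 * κ₀) * (κ₀ - c) - 2 * γ * μ * A with hE
      rw [inv_div]
      field_simp


theorem hyperslab_prox_deriv_mu_gamma {n : ℕ} (a : EuclideanSpace ℝ (Fin n)) (ha : a ≠ 0)
    (bm bM : ℝ) (hb : bm < bM) (x : EuclideanSpace ℝ (Fin n))
    (κ : ℝ → ℝ → ℝ)
    (hκ : ∀ μ γ : ℝ, 0 < μ → 0 < γ → κ μ γ ∈ Set.Ioo bm bM ∧
      (κ μ γ) ^ 3 - (bm + bM + ⟪a, x⟫_ℝ) * (κ μ γ) ^ 2 +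
        (bm * bM + ⟪a, x⟫_ℝ * (bm + bM) - 2 * γ * μ * ‖a‖ ^ 2) * (κ μ γ) -
        bm * bM * ⟪a, x⟫_ℝ + γ * μ * (bm + bM) * ‖a‖ ^ 2 = 0) :
    ∀ μ γ : ℝ, 0 < μ → 0 < γ →
      DifferentiableAt ℝ
        (fun p : ℝ × ℝ => x + ((κ p.1 p.2 - ⟪a, x⟫_ℝ) / ‖a‖ ^ 2) • a) (μ, γ) ∧
      HasDerivAt (fun t : ℝ => x + ((κ t γ - ⟪a, x⟫_ℝ) / ‖a‖ ^ 2) • a)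
        ((-γ * (bm + bM - 2 * κ μ γ) /
            ((bM - κ μ γ) * (bm - κ μ γ) -
              (bm + bM - 2 * κ μ γ) * (κ μ γ - ⟪a, x⟫_ℝ) - 2 * γ * μ * ‖a‖ ^ 2)) • a) μ ∧
      HasDerivAt (fun t : ℝ => x + ((κ μ t - ⟪a, x⟫_ℝ) / ‖a‖ ^ 2) • a)
        ((-μ * (bm + bM - 2 * κ μ γ) /
            ((bM - κ μ γ) * (bm - κ μ γ) -
              (bm + bM - 2 * κ μ γ) * (κ μ γ - ⟪a, x⟫_ℝ) - 2 * γ * μ * ‖a‖ ^ 2)) • a) γ := by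
  intro μ γ hμ hγ
  have hA : (0 : ℝ) < ‖a‖ ^ 2 := pow_pos (norm_pos_iff.mpr ha) 2
  obtain ⟨hdiff, hdμ, hdγ⟩ := key_scalar bm bM ⟪a, x⟫_ℝ (‖a‖ ^ 2) hA κ
    (fun μ' γ' hμ' hγ' => ⟨(hκ μ' γ' hμ' hγ').1, by linear_combination (hκ μ' γ' hμ' hγ').2⟩)
    μ γ hμ hγ
  exact ⟨(differentiableAt_const x).add (hdiff.smul_const a),
    (hdμ.smul_const a).const_add x, (hdγ.smul_const a).const_add x⟩
end

section
/- Let α > 0, γ > 0, μ > 0, and r ≥ 0. Then the cubic equation z³ − r z² − (α + 2γμ) z + α r = 0 has exactly one solution z in the half-open interval [0, √α). -/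
theorem ball_cubic_unique_root (α γ μ r : ℝ) (hα : 0 < α) (hγ : 0 < γ) (hμ : 0 < μ)
    (hr : 0 ≤ r) :
    ∃! z : ℝ, z ∈ Set.Ico 0 (Real.sqrt α) ∧
      z ^ 3 - r * z ^ 2 - (α + 2 * γ * μ) * z + α * r = 0 := by
  set s := Real.sqrt α with hs
  have hs0 : 0 < s := Real.sqrt_pos.mpr hα
  have hsq : s * s = α := Real.mul_self_sqrt hα.le
  -- any root in [0, s) satisfies z ≤ r
  have key : ∀ z : ℝ, z ∈ Set.Ico 0 s →
      z ^ 3 - r * z ^ 2 - (α + 2 * γ * μ) * z + α * r = 0 → z ≤ r := by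
    rintro z ⟨hz0, hzs⟩ hroot
    by_contra h
    push_neg at h
    have hz2 : z ^ 2 < α := by
      have h1 := mul_self_lt_mul_self hz0 hzs
      nlinarith [hsq]
    nlinarith [mul_pos (mul_pos hγ hμ) (hr.trans_lt h),
      mul_pos (sub_pos.mpr h) (sub_pos.mpr hz2)]
  -- any two roots in [0, s) are equal
  have uniq : ∀ z1 z2 : ℝ, z1 ∈ Set.Ico 0 s →
      z1 ^ 3 - r * z1 ^ 2 - (α + 2 * γ * μ) * z1 + α * r = 0 →
      z2 ∈ Set.Ico 0 s →
      z2 ^ 3 - r * z2 ^ 2 - (α + 2 * γ * μ) * z2 + α * r = 0 → z1 = z2 := by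
    rintro z1 z2 ⟨h10, h1s⟩ e1 ⟨h20, h2s⟩ e2
    have hr1 := key z1 ⟨h10, h1s⟩ e1
    have hr2 := key z2 ⟨h20, h2s⟩ e2
    have hq1 : z1 ^ 2 < α := by
      have h1 := mul_self_lt_mul_self h10 h1s
      nlinarith [hsq]
    have hq2 : z2 ^ 2 < α := by
      have h1 := mul_self_lt_mul_self h20 h2s
      nlinarith [hsq]
    by_contra hne
    have hfac : (z1 - z2) * (z1 ^ 2 + z1 * z2 + z2 ^ 2 - r * (z1 + z2)
        - (α + 2 * γ * μ)) = 0 := by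
      linear_combination e1 - e2
    have hQ : z1 ^ 2 + z1 * z2 + z2 ^ 2 - r * (z1 + z2) - (α + 2 * γ * μ) < 0 := by
      nlinarith [mul_nonneg h10 (sub_nonneg.mpr hr1),
        mul_nonneg h20 (sub_nonneg.mpr hr2), mul_pos hγ hμ, sq_nonneg (z1 - z2)]
    exact mul_ne_zero (sub_ne_zero.mpr hne) (ne_of_lt hQ) hfac
  rcases eq_or_lt_of_le hr with hr0 | hr0
  · -- r = 0 : the unique root is 0
    refine ⟨0, ⟨⟨le_refl 0, hs0⟩, by rw [← hr0]; ring⟩, ?_⟩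
    rintro z ⟨hz, hroot⟩
    have h := key z hz hroot
    rw [← hr0] at h
    exact le_antisymm h hz.1
  · -- r > 0 : IVT on [0, min r s]
    set m := min r s with hm
    have hm0 : 0 < m := lt_min hr0 hs0
    set f : ℝ → ℝ := fun z => z ^ 3 - r * z ^ 2 - (α + 2 * γ * μ) * z + α * r
      with hf
    have hcont : Continuous f := by fun_prop
    have hf0 : 0 < f 0 := by
      simp only [hf]
      nlinarith
    have hfm : f m < 0 := by
      rcases min_cases r s with ⟨h1, _⟩ | ⟨h1, _⟩ <;> simp only [hf, hm, h1] <;>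
        nlinarith [mul_pos (mul_pos hγ hμ) hr0, mul_pos (mul_pos hγ hμ) hs0]
    have hsub := intermediate_value_Ioo' hm0.le hcont.continuousOn
    have h0mem : (0 : ℝ) ∈ Set.Ioo (f m) (f 0) := ⟨hfm, hf0⟩
    obtain ⟨c, hc, hfc⟩ := hsub h0mem
    have hcs : c < s := lt_of_lt_of_le hc.2 (min_le_right r s)
    refine ⟨c, ⟨⟨hc.1.le, hcs⟩, hfc⟩, ?_⟩
    rintro z ⟨hz, hroot⟩
    exact uniq z c hz hroot ⟨hc.1.le, hcs⟩ hfc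
end

section
/- Let α > 0, γ > 0, μ > 0, x ∈ ℝⁿ, and let v ∈ ℝⁿ be the unique minimizer over u with ‖u‖² < α of (1/2)‖x − u‖² − γμ ln(α − ‖u‖²). Then v satisfies the fixed-point equation v = ((α − ‖v‖²)/(α − ‖v‖² + 2γμ)) x, the inner product vᵀ(x − v) is nonnegative, and α − ‖v‖² + 2γμ + 2 vᵀ(x − v) > 0. -/
open scoped InnerProductSpace

theorem ball_prox_fixed_point {n : ℕ} (α : ℝ) (hα : 0 < α) (γ μ : ℝ) (hγ : 0 < γ)
    (hμ : 0 < μ) (x v : EuclideanSpace ℝ (Fin n)) (hv : ‖v‖ ^ 2 < α)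
    (hmin : ∀ u : EuclideanSpace ℝ (Fin n), ‖u‖ ^ 2 < α → u ≠ v →
      1 / 2 * ‖x - v‖ ^ 2 - γ * μ * Real.log (α - ‖v‖ ^ 2) <
        1 / 2 * ‖x - u‖ ^ 2 - γ * μ * Real.log (α - ‖u‖ ^ 2)) :
    v = ((α - ‖v‖ ^ 2) / (α - ‖v‖ ^ 2 + 2 * γ * μ)) • x ∧
    0 ≤ ⟪v, x - v⟫_ℝ ∧
    0 < α - ‖v‖ ^ 2 + 2 * γ * μ + 2 * ⟪v, x - v⟫_ℝ := by
  have hs : 0 < α - ‖v‖ ^ 2 := by linarith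
  set s : ℝ := α - ‖v‖ ^ 2 with hs_def
  have key : ∀ w : EuclideanSpace ℝ (Fin n),
      ⟪x - v, w⟫_ℝ = (2 * γ * μ / s) * ⟪v, w⟫_ℝ := by
    intro w
    set b : ℝ := ⟪x - v, w⟫_ℝ with hb
    set d : ℝ := ⟪v, w⟫_ℝ with hd
    set g : ℝ → ℝ := fun t =>
      1 / 2 * (‖x - v‖ ^ 2 - 2 * t * b + t ^ 2 * ‖w‖ ^ 2)
        - γ * μ * Real.log (s - 2 * t * d - t ^ 2 * ‖w‖ ^ 2) with hg_def
    have hnorm1 : ∀ t : ℝ, ‖v + t • w‖ ^ 2 = ‖v‖ ^ 2 + 2 * t * d + t ^ 2 * ‖w‖ ^ 2 := by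
      intro t
      rw [norm_add_sq_real, real_inner_smul_right, norm_smul, mul_pow,
        Real.norm_eq_abs, sq_abs]
      ring
    have hnorm2 : ∀ t : ℝ, ‖x - (v + t • w)‖ ^ 2
        = ‖x - v‖ ^ 2 - 2 * t * b + t ^ 2 * ‖w‖ ^ 2 := by
      intro t
      have : x - (v + t • w) = (x - v) - t • w := by abel
      rw [this, norm_sub_sq_real, real_inner_smul_right, norm_smul, mul_pow,
        Real.norm_eq_abs, sq_abs]
      ring
    have hq_eq : ∀ t : ℝ, α - ‖v + t • w‖ ^ 2 = s - 2 * t * d - t ^ 2 * ‖w‖ ^ 2 := by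
      intro t; rw [hnorm1]; simp [hs_def]; ring
    have hgf : ∀ t : ℝ, g t = 1 / 2 * ‖x - (v + t • w)‖ ^ 2
        - γ * μ * Real.log (α - ‖v + t • w‖ ^ 2) := by
      intro t; rw [hq_eq, hnorm2]
    have hg0 : g 0 = 1 / 2 * ‖x - v‖ ^ 2 - γ * μ * Real.log (α - ‖v‖ ^ 2) := by
      have := hgf 0
      simpa using this
    -- local min
    have hcont : Continuous (fun t : ℝ => s - 2 * t * d - t ^ 2 * ‖w‖ ^ 2) := by
      continuity
    have hopen : IsOpen {t : ℝ | 0 < s - 2 * t * d - t ^ 2 * ‖w‖ ^ 2} :=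
      isOpen_lt continuous_const hcont
    have h0mem : (0 : ℝ) ∈ {t : ℝ | 0 < s - 2 * t * d - t ^ 2 * ‖w‖ ^ 2} := by
      simp [hs]
    have hloc : IsLocalMin g 0 := by
      filter_upwards [hopen.mem_nhds h0mem] with t ht
      have hball : ‖v + t • w‖ ^ 2 < α := by
        have h1 := hq_eq t
        have h2 : 0 < s - 2 * t * d - t ^ 2 * ‖w‖ ^ 2 := ht
        linarith
      rw [hg0, hgf t]
      by_cases h : v + t • w = v
      · rw [h]
      · exact (hmin _ hball h).le
    -- derivative
    have hid : HasDerivAt (fun t : ℝ => t) 1 0 := hasDerivAt_id 0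
    have hp : HasDerivAt (fun t : ℝ => ‖x - v‖ ^ 2 - 2 * t * b + t ^ 2 * ‖w‖ ^ 2)
        (-(2 * b)) 0 := by
      have h1 := (hid.const_mul (2:ℝ)).mul_const b
      have h2 := (hasDerivAt_pow 2 (0:ℝ)).mul_const (‖w‖ ^ 2)
      have := ((hasDerivAt_const (0:ℝ) (‖x - v‖ ^ 2)).sub h1).add h2
      refine this.congr_deriv ?_
      norm_num
    have hqd : HasDerivAt (fun t : ℝ => s - 2 * t * d - t ^ 2 * ‖w‖ ^ 2)
        (-(2 * d)) 0 := by
      have h1 := (hid.const_mul (2:ℝ)).mul_const d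
      have h2 := (hasDerivAt_pow 2 (0:ℝ)).mul_const (‖w‖ ^ 2)
      have := ((hasDerivAt_const (0:ℝ) s).sub h1).sub h2
      refine this.congr_deriv ?_
      norm_num
    have hq0ne : (fun t : ℝ => s - 2 * t * d - t ^ 2 * ‖w‖ ^ 2) 0 ≠ 0 := by
      have h : (fun t : ℝ => s - 2 * t * d - t ^ 2 * ‖w‖ ^ 2) 0 = s := by norm_num
      rw [h]; exact ne_of_gt hs
    have hlog := hqd.log hq0ne
    have hgd : HasDerivAt g (-b + 2 * γ * μ * d / s) 0 := by
      have := (hp.const_mul (1/2 : ℝ)).sub (hlog.const_mul (γ * μ))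
      refine this.congr_deriv ?_
      simp
      field_simp
      ring
    have hz : -b + 2 * γ * μ * d / s = 0 := by
      have := hloc.deriv_eq_zero
      rw [hgd.deriv] at this
      exact this
    have hb2 : b = 2 * γ * μ * d / s := by linarith
    rw [hb2]; ring
  -- conclusions
  set c : ℝ := 2 * γ * μ / s with hc_def
  have hc : 0 ≤ c := by positivity
  have hxv : x - v = c • v := by
    have h0 : ⟪x - v - c • v, x - v - c • v⟫_ℝ = 0 := by
      have hk := key (x - v - c • v)
      have hexp : ⟪x - v - c • v, x - v - c • v⟫_ℝ
          = ⟪x - v, x - v - c • v⟫_ℝ - c * ⟪v, x - v - c • v⟫_ℝ := by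
        rw [inner_sub_left, real_inner_smul_left]
      rw [hexp, hk]; ring
    exact sub_eq_zero.mp (inner_self_eq_zero.mp h0)
  have hinner : ⟪v, x - v⟫_ℝ = c * ‖v‖ ^ 2 := by
    rw [hxv, real_inner_smul_right, real_inner_self_eq_norm_sq]
  have hspos : 0 < s + 2 * γ * μ := by positivity
  refine ⟨?_, ?_, ?_⟩
  · have hx : x = (1 + c) • v := by
      have : x = v + c • v := by
        have := hxv
        rw [sub_eq_iff_eq_add] at this
        rw [this]; abel
      rw [this, add_smul, one_smul]
    rw [hx, smul_smul]
    have : s / (s + 2 * γ * μ) * (1 + c) = 1 := by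
      rw [hc_def]
      field_simp
    rw [this, one_smul]
  · rw [hinner]; positivity
  · rw [hinner]
    have : 0 ≤ c * ‖v‖ ^ 2 := by positivity
    linarith
end

section
/- Let K ≥ 1 be an integer, set θ₋₁ = 1, and for k ∈ {0, …, K−1} let W_k ∈ ℝ^{n×n} and define θ_k = ‖W_k ⋯ W_0‖ + Σ_{ℓ=0}^{k−1} Σ_{0 ≤ j_0 < ⋯ < j_ℓ ≤ k−1} ‖W_k ⋯ W_{j_ℓ+1}‖ · ‖W_{j_ℓ} ⋯ W_{j_{ℓ−1}+1}‖ ⋯ ‖W_{j_0} ⋯ W_0‖. Then for every k ∈ {0, …, K−1}, θ_k = Σ_{ℓ=0}^{k} θ_{ℓ−1} ‖W_k ⋯ W_ℓ‖. -/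
open scoped Matrix.Norms.L2Operator

/-- The ordered matrix product `W_k * W_{k-1} * ⋯ * W_l`. -/
noncomputable def matProdRange {n : ℕ} (W : ℕ → Matrix (Fin n) (Fin n) ℝ) (l k : ℕ) :
    Matrix (Fin n) (Fin n) ℝ :=
  (((List.range (k + 1 - l)).map fun i => W (k - i)).prod)

/-- Given cut points `j₀ < j₁ < ⋯ < jₗ` followed by the final index `k`, the product of the
spectral norms of the blocks `‖W_{j₀}⋯W_{lo}‖ ⋅ ‖W_{j₁}⋯W_{j₀+1}‖ ⋯ ‖W_k⋯W_{jₗ+1}‖`. -/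
noncomputable def blockNormProd {n : ℕ} (W : ℕ → Matrix (Fin n) (Fin n) ℝ) :
    ℕ → List ℕ → ℝ
  | _, [] => 1
  | lo, j :: rest => ‖matProdRange W lo j‖ * blockNormProd W (j + 1) rest

/-- `θ_k` defined by the explicit double sum
`θ_k = ‖W_k⋯W_0‖ + Σ_{ℓ=0}^{k-1} Σ_{0 ≤ j₀ < ⋯ < j_ℓ ≤ k-1} ‖W_k⋯W_{j_ℓ+1}‖⋯‖W_{j₀}⋯W_0‖`,
written as a sum over all subsets of `{0, …, k-1}` of the associated block-norm products. -/
noncomputable def thetaDoubleSum {n : ℕ} (W : ℕ → Matrix (Fin n) (Fin n) ℝ) (k : ℕ) : ℝ :=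
  ∑ S ∈ (Finset.range k).powerset, blockNormProd W 0 (S.sort (· ≤ ·) ++ [k])

lemma blockNormProd_append_two {n : ℕ} (W : ℕ → Matrix (Fin n) (Fin n) ℝ) :
    ∀ (xs : List ℕ) (lo a b : ℕ),
      blockNormProd W lo (xs ++ [a, b]) =
        blockNormProd W lo (xs ++ [a]) * ‖matProdRange W (a + 1) b‖ := by
  intro xs
  induction xs with
  | nil =>
    intro lo a b
    simp only [List.nil_append, blockNormProd, mul_one]
  | cons x xs ih =>
    intro lo a b
    simp only [List.cons_append, blockNormProd, List.append_eq]
    rw [ih]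
    ring

open scoped List in
lemma sort_insert_top {S : Finset ℕ} {k : ℕ} (h : ∀ b ∈ S, b < k) :
    (insert k S).sort (· ≤ ·) = S.sort (· ≤ ·) ++ [k] := by
  have hk : k ∉ S := fun hmem => lt_irrefl k (h k hmem)
  refine (fun hp hs => List.Perm.eq_of_pairwise' (Finset.pairwise_sort _ _) hs hp) ?_ ?_
  · calc (insert k S).sort (· ≤ ·) ~ (insert k S).toList := Finset.sort_perm_toList _ _
      _ ~ k :: S.toList := Finset.toList_insert hk
      _ ~ k :: S.sort (· ≤ ·) := List.Perm.cons _ (Finset.sort_perm_toList _ _).symm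
      _ ~ (S.sort (· ≤ ·) ++ [k]) := (List.perm_append_singleton _ _).symm
  · refine List.pairwise_append.mpr ⟨Finset.pairwise_sort _ _, List.pairwise_singleton _ _, ?_⟩
    intro a ha b hb
    rw [List.mem_singleton] at hb
    subst hb
    exact le_of_lt (h a ((Finset.mem_sort _).mp ha))

lemma key_sum {n : ℕ} (W : ℕ → Matrix (Fin n) (Fin n) ℝ) (k m : ℕ) :
    ∑ S ∈ (Finset.range k).powerset, blockNormProd W 0 (S.sort (· ≤ ·) ++ [m]) =
      ‖matProdRange W 0 m‖ +
        ∑ l ∈ Finset.range k, thetaDoubleSum W l * ‖matProdRange W (l + 1) m‖ := by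
  induction k with
  | zero => simp [blockNormProd]
  | succ k ih =>
    rw [Finset.sum_range_succ, Finset.range_add_one, Finset.sum_powerset_insert (by simp)]
    rw [ih]
    have h2 : ∀ S ∈ (Finset.range k).powerset,
        blockNormProd W 0 ((insert k S).sort (· ≤ ·) ++ [m]) =
          blockNormProd W 0 (S.sort (· ≤ ·) ++ [k]) * ‖matProdRange W (k + 1) m‖ := by
      intro S hS
      rw [Finset.mem_powerset] at hS
      rw [sort_insert_top (fun b hb => Finset.mem_range.mp (hS hb))]
      rw [← blockNormProd_append_two]
      simp
    rw [Finset.sum_congr rfl h2, ← Finset.sum_mul]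
    rw [thetaDoubleSum]
    ring

theorem theta_recursion {n K : ℕ} (hK : 1 ≤ K) (W : ℕ → Matrix (Fin n) (Fin n) ℝ)
    (θ : ℕ → ℝ) (hθ0 : θ 0 = 1)
    (hθ : ∀ k, k ≤ K - 1 → θ (k + 1) = thetaDoubleSum W k) :
    ∀ k, k ≤ K - 1 →
      θ (k + 1) = ∑ l ∈ Finset.range (k + 1), θ l * ‖matProdRange W l k‖ := by
  intro k hk
  rw [hθ k hk, thetaDoubleSum, key_sum, Finset.sum_range_succ']
  rw [hθ0, one_mul, add_comm]
  congr 1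
  apply Finset.sum_congr rfl
  intro l hl
  have hl' := Finset.mem_range.mp hl
  rw [hθ l (by omega)]
end

section
/- Let K ≥ 1 be an integer, θ > 0, α ∈ [1/2, 1], let W be a symmetric n×n real matrix, and let β₋ and β₊ denote the smallest and largest eigenvalues of W, respectively. Then the inequality ‖W − 2^K (1−α) Iₙ‖ − ‖W‖ + 2θ ≤ 2^K α holds if and only if one of the following three conditions holds: (i) β₊ + β₋ ≤ 0 and θ ≤ 2^{K−1}(2α − 1); (ii) 0 ≤ β₊ + β₋ ≤ 2^{K+1}(1−α) and 2θ ≤ β₊ + β₋ + 2^K (2α − 1); (iii) 2^{K+1}(1−α) ≤ β₊ + β₋ and θ ≤ 2^{K−1}. -/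
open scoped Matrix.Norms.L2Operator

open Matrix in
lemma abs_le_norm_of_eigen {n : ℕ} (W : Matrix (Fin n) (Fin n) ℝ) {β : ℝ}
    {v : Fin n → ℝ} (hv : v ≠ 0) (h : W.mulVec v = β • v) : |β| ≤ ‖W‖ := by
  set x : EuclideanSpace ℝ (Fin n) := (EuclideanSpace.equiv (Fin n) ℝ).symm v with hx
  have hxne : x ≠ 0 := by simpa [hx] using hv
  have h1 := W.l2_opNorm_mulVec x
  have h2 : W.mulVec x = β • (v : Fin n → ℝ) := h
  rw [h2] at h1
  have h3 : ‖(EuclideanSpace.equiv (Fin n) ℝ).symm (β • v)‖ = |β| * ‖x‖ := by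
    rw [_root_.map_smul, norm_smul, Real.norm_eq_abs]
  rw [h3] at h1
  exact le_of_mul_le_mul_right h1 (norm_pos_iff.mpr hxne)

open Matrix in
lemma norm_le_of_eigen_bound {n : ℕ} (W : Matrix (Fin n) (Fin n) ℝ) (hW : W.IsSymm)
    (M : ℝ) (hM : 0 ≤ M)
    (h : ∀ β : ℝ, (∃ v : Fin n → ℝ, v ≠ 0 ∧ W.mulVec v = β • v) → |β| ≤ M) :
    ‖W‖ ≤ M := by
  have hA : W.IsHermitian := hW
  set b := hA.eigenvectorBasis with hb
  have hev : ∀ j, |hA.eigenvalues j| ≤ M := by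
    intro j
    refine h _ ⟨b j, ?_, hA.mulVec_eigenvectorBasis j⟩
    exact fun hz => b.orthonormal.ne_zero j (by ext i; exact congrFun hz i)
  rw [Matrix.l2_opNorm_def]
  refine ContinuousLinearMap.opNorm_le_bound _ hM (fun x => ?_)
  set y : EuclideanSpace ℝ (Fin n) :=
    (Matrix.toEuclideanLin.trans LinearMap.toContinuousLinearMap) W x with hy
  have h1 : (y : Fin n → ℝ) = W.mulVec x := rfl
  have hyv : ∀ j, b.repr y j = hA.eigenvalues j * b.repr x j := by
    intro j
    rw [OrthonormalBasis.repr_apply_apply, OrthonormalBasis.repr_apply_apply]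
    calc (inner ℝ (b j) y : ℝ) = (⇑(b j) : Fin n → ℝ) ⬝ᵥ W.mulVec x := by
          rw [PiLp.inner_apply]; simp [dotProduct, h1, mul_comm]
      _ = (W.mulVec (⇑(b j))) ⬝ᵥ x := by
          rw [Matrix.dotProduct_mulVec, ← Matrix.mulVec_transpose, hW.eq]
      _ = hA.eigenvalues j * ((⇑(b j) : Fin n → ℝ) ⬝ᵥ x) := by
          rw [hA.mulVec_eigenvectorBasis j, smul_dotProduct]
          simp [hb]
      _ = hA.eigenvalues j * (inner ℝ (b j) x : ℝ) := by
          rw [PiLp.inner_apply]; simp [dotProduct, mul_comm]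
  calc ‖y‖ = ‖b.repr y‖ := (b.repr.norm_map y).symm
    _ ≤ M * ‖b.repr x‖ := by
        rw [EuclideanSpace.norm_eq, EuclideanSpace.norm_eq]
        have key : (∑ i, ‖b.repr y i‖ ^ 2) ≤ M ^ 2 * ∑ i, ‖b.repr x i‖ ^ 2 := by
          rw [Finset.mul_sum]
          apply Finset.sum_le_sum
          intro i _
          rw [hyv i, ← mul_pow]
          have hle : ‖hA.eigenvalues i * b.repr x i‖ ≤ M * ‖b.repr x i‖ := by
            rw [norm_mul]
            exact mul_le_mul_of_nonneg_right (by simpa using hev i) (norm_nonneg _)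
          exact pow_le_pow_left₀ (norm_nonneg _) hle 2
        calc Real.sqrt (∑ i, ‖b.repr y i‖ ^ 2)
            ≤ Real.sqrt (M ^ 2 * ∑ i, ‖b.repr x i‖ ^ 2) := Real.sqrt_le_sqrt key
          _ = M * Real.sqrt (∑ i, ‖b.repr x i‖ ^ 2) := by
              rw [Real.sqrt_mul (sq_nonneg M), Real.sqrt_sq hM]
    _ = M * ‖x‖ := by rw [b.repr.norm_map x]

lemma symm_norm_eq {n : ℕ} (W : Matrix (Fin n) (Fin n) ℝ) (hW : W.IsSymm) (βm βp : ℝ)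
    (hβm : (∃ v : Fin n → ℝ, v ≠ 0 ∧ W.mulVec v = βm • v) ∧
      ∀ β : ℝ, (∃ v : Fin n → ℝ, v ≠ 0 ∧ W.mulVec v = β • v) → βm ≤ β)
    (hβp : (∃ v : Fin n → ℝ, v ≠ 0 ∧ W.mulVec v = βp • v) ∧
      ∀ β : ℝ, (∃ v : Fin n → ℝ, v ≠ 0 ∧ W.mulVec v = β • v) → β ≤ βp) :
    ‖W‖ = max βp (-βm) := by
  have hmp : βm ≤ βp := hβp.2 βm hβm.1
  have hM0 : 0 ≤ max βp (-βm) := by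
    have := le_max_left βp (-βm); have := le_max_right βp (-βm); linarith
  refine le_antisymm (norm_le_of_eigen_bound W hW _ hM0 ?_) ?_
  · rintro β hβ
    have h1 : βm ≤ β := hβm.2 β hβ
    have h2 : β ≤ βp := hβp.2 β hβ
    have := le_max_left βp (-βm); have := le_max_right βp (-βm)
    rcases abs_cases β with ⟨he, _⟩ | ⟨he, _⟩ <;> linarith
  · obtain ⟨v, hv, hWv⟩ := hβp.1
    obtain ⟨w, hw, hWw⟩ := hβm.1
    have h1 := abs_le_norm_of_eigen W hv hWv
    have h2 := abs_le_norm_of_eigen W hw hWw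
    rcases abs_cases βp with ⟨he, _⟩ | ⟨he, _⟩ <;>
    rcases abs_cases βm with ⟨he', _⟩ | ⟨he', _⟩ <;>
    · apply max_le <;> linarith

theorem spectral_condition_equiv {n : ℕ} (K : ℕ) (hK : 1 ≤ K) (θ : ℝ) (hθ : 0 < θ)
    (α : ℝ) (hα : α ∈ Set.Icc (1 / 2 : ℝ) 1)
    (W : Matrix (Fin n) (Fin n) ℝ) (hW : W.IsSymm) (βm βp : ℝ)
    (hβm : (∃ v : Fin n → ℝ, v ≠ 0 ∧ W.mulVec v = βm • v) ∧
      ∀ β : ℝ, (∃ v : Fin n → ℝ, v ≠ 0 ∧ W.mulVec v = β • v) → βm ≤ β)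
    (hβp : (∃ v : Fin n → ℝ, v ≠ 0 ∧ W.mulVec v = βp • v) ∧
      ∀ β : ℝ, (∃ v : Fin n → ℝ, v ≠ 0 ∧ W.mulVec v = β • v) → β ≤ βp) :
    ‖W - ((2 : ℝ) ^ K * (1 - α)) • (1 : Matrix (Fin n) (Fin n) ℝ)‖ - ‖W‖ + 2 * θ ≤
        (2 : ℝ) ^ K * α ↔
      (βp + βm ≤ 0 ∧ θ ≤ (2 : ℝ) ^ (K - 1) * (2 * α - 1)) ∨
      (0 ≤ βp + βm ∧ βp + βm ≤ (2 : ℝ) ^ (K + 1) * (1 - α) ∧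
        2 * θ ≤ βp + βm + (2 : ℝ) ^ K * (2 * α - 1)) ∨
      ((2 : ℝ) ^ (K + 1) * (1 - α) ≤ βp + βm ∧ θ ≤ (2 : ℝ) ^ (K - 1)) := by
  obtain ⟨hα1, hα2⟩ := hα
  set P : ℝ := (2 : ℝ) ^ K with hP
  have hPpos : (0 : ℝ) < P := by positivity
  set c : ℝ := P * (1 - α) with hc
  have hc0 : 0 ≤ c := mul_nonneg hPpos.le (by linarith)
  have e1 : (2 : ℝ) ^ (K - 1) = P / 2 := by
    rw [eq_div_iff (two_ne_zero), ← pow_succ, hP]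
    congr 1
    omega
  have e2 : (2 : ℝ) ^ (K + 1) = 2 * P := by rw [pow_succ, hP]; ring
  -- the shifted matrix
  have hW' : (W - c • (1 : Matrix (Fin n) (Fin n) ℝ)).IsSymm := by
    rw [Matrix.IsSymm, Matrix.transpose_sub, Matrix.transpose_smul, Matrix.transpose_one, hW.eq]
  have hmv : ∀ v : Fin n → ℝ,
      (W - c • (1 : Matrix (Fin n) (Fin n) ℝ)).mulVec v = W.mulVec v - c • v := by
    intro v
    rw [Matrix.sub_mulVec, Matrix.smul_mulVec, Matrix.one_mulVec]
  have hβm' : (∃ v : Fin n → ℝ, v ≠ 0 ∧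
        (W - c • (1 : Matrix (Fin n) (Fin n) ℝ)).mulVec v = (βm - c) • v) ∧
      ∀ β : ℝ, (∃ v : Fin n → ℝ, v ≠ 0 ∧
        (W - c • (1 : Matrix (Fin n) (Fin n) ℝ)).mulVec v = β • v) → βm - c ≤ β := by
    constructor
    · obtain ⟨v, hv, hWv⟩ := hβm.1
      exact ⟨v, hv, by rw [hmv, hWv, sub_smul]⟩
    · rintro β ⟨v, hv, hWv⟩
      rw [hmv] at hWv
      have : W.mulVec v = (β + c) • v := by
        rw [add_smul, ← hWv]; abel
      have := hβm.2 (β + c) ⟨v, hv, this⟩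
      linarith
  have hβp' : (∃ v : Fin n → ℝ, v ≠ 0 ∧
        (W - c • (1 : Matrix (Fin n) (Fin n) ℝ)).mulVec v = (βp - c) • v) ∧
      ∀ β : ℝ, (∃ v : Fin n → ℝ, v ≠ 0 ∧
        (W - c • (1 : Matrix (Fin n) (Fin n) ℝ)).mulVec v = β • v) → β ≤ βp - c := by
    constructor
    · obtain ⟨v, hv, hWv⟩ := hβp.1
      exact ⟨v, hv, by rw [hmv, hWv, sub_smul]⟩
    · rintro β ⟨v, hv, hWv⟩
      rw [hmv] at hWv
      have : W.mulVec v = (β + c) • v := by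
        rw [add_smul, ← hWv]; abel
      have := hβp.2 (β + c) ⟨v, hv, this⟩
      linarith
  have hn1 : ‖W‖ = max βp (-βm) := symm_norm_eq W hW βm βp hβm hβp
  have hn2 : ‖W - c • (1 : Matrix (Fin n) (Fin n) ℝ)‖ = max (βp - c) (-(βm - c)) :=
    symm_norm_eq _ hW' (βm - c) (βp - c) hβm' hβp'
  rw [hn1, hn2, e1, e2]
  have hmp : βm ≤ βp := hβp.2 βm hβm.1
  have hPid : P * α + P * (1 - α) = P := by ring
  have hPid2 : P * (2 * α - 1) = P * α - P * (1 - α) := by ring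
  have hPid3 : 2 * (P / 2 * (2 * α - 1)) = P * (2 * α - 1) := by ring
  have hPid4 : 2 * (P / 2) = P := by ring
  rcases le_total (βp + βm) 0 with hs | hs
  · rw [max_eq_right (by linarith : βp ≤ -βm),
      max_eq_right (by linarith : βp - c ≤ -(βm - c))]
    constructor
    · intro h
      left
      constructor
      · exact hs
      · linarith
    · rintro (⟨h1, h2⟩ | ⟨h1, h2, h3⟩ | ⟨h1, h2⟩) <;> linarith
  · rw [max_eq_left (by linarith : -βm ≤ βp)]
    rcases le_total (βp + βm) (2 * c) with hs2 | hs2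
    · rw [max_eq_right (by linarith : βp - c ≤ -(βm - c))]
      constructor
      · intro h
        right; left
        refine ⟨hs, by linarith, by linarith⟩
      · rintro (⟨h1, h2⟩ | ⟨h1, h2, h3⟩ | ⟨h1, h2⟩) <;> linarith
    · rw [max_eq_left (by linarith : -(βm - c) ≤ βp - c)]
      constructor
      · intro h
        right; right
        exact ⟨by linarith, by linarith⟩
      · rintro (⟨h1, h2⟩ | ⟨h1, h2, h3⟩ | ⟨h1, h2⟩) <;> linarith
end

section
/- Let K ≥ 1 be an integer, α ∈ [1/2, 1], y ∈ ℝⁿ, and for k ∈ {0, …, K−1} let γ_k > 0, λ_k > 0, μ_k > 0. Let H and D be n×n real matrices such that HᵀH and DᵀD are simultaneously diagonalized by a common orthogonal matrix. Let B : ℝⁿ → ℝ ∪ {+∞} be a proper convex lower semicontinuous function given as the logarithmic barrier B(x) = −Σ_{i=1}^{p} ln(c_i(x)) on {x : c_i(x) > 0 for all i} and +∞ elsewhere, where each −c_i is proper convex lower semicontinuous and {x : c_i(x) > 0 for all i} is nonempty. For k ∈ {0, …, K−1} set W_k = Iₙ − γ_k (HᵀH + λ_k DᵀD), b_k = γ_k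 Hᵀy, and let R_k : ℝⁿ → ℝⁿ map each z to the unique minimizer over u ∈ ℝⁿ of (1/2)‖z − u‖² + γ_k μ_k B(u). Let β₋ and β₊ be the smallest and largest eigenvalues of W = W_{K−1} ⋯ W_0 and let θ_{K−1} be defined by θ₋₁ = 1 and θ_k = Σ_{ℓ=0}^{k} θ_{ℓ−1} ‖W_k ⋯ W_ℓ‖. If one of the following holds: (i) β₊ + β₋ ≤ 0 and θ_{K−1} ≤ 2^{K−1}(2α − 1); (ii) 0 ≤ β₊ + β₋ ≤ 2^{K+1}(1−α) and 2θ_{K−1} ≤ β₊ + β₋ + 2^K(2α − 1); (iii) 2^{K+1}(1−α) ≤ β₊ + β₋ and θ_{K−1} ≤ 2^{K−1}; then the operator T = R_{K−1} ∘ (W_{K−1}· + b_{K−1}) ∘ ⋯ ∘ R_0 ∘ (W_0· + b_0) is α-averaged, i.e. there exists a nonexpansive operator R : ℝⁿ → ℝⁿ such that T = (1−α) Id + α R. -/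
open Matrix
open scoped Matrix.Norms.L2Operator

/-- Logarithmic barrier associated with the constraints `c i x > 0`. -/
noncomputable def logBarrier {n p : ℕ} (c : Fin p → EuclideanSpace ℝ (Fin n) → ℝ)
    (x : EuclideanSpace ℝ (Fin n)) : EReal :=
  if ∀ i, 0 < c i x then ((-(∑ i, Real.log (c i x)) : ℝ) : EReal) else ⊤

/-- The composition `R_{k-1} ∘ (W_{k-1}· + b_{k-1}) ∘ ⋯ ∘ R_0 ∘ (W_0· + b_0)`,
where `A k = W_k· + b_k`. -/
def iterLayers {n : ℕ} (R A : ℕ → EuclideanSpace ℝ (Fin n) → EuclideanSpace ℝ (Fin n)) :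
    ℕ → EuclideanSpace ℝ (Fin n) → EuclideanSpace ℝ (Fin n)
  | 0 => id
  | k + 1 => fun x => R k (A k (iterLayers R A k x))

section Aux

open scoped RealInnerProductSpace

/-! ### Ordered products -/

noncomputable def prodW {n : ℕ} (W : ℕ → Matrix (Fin n) (Fin n) ℝ) (l : ℕ) :
    ℕ → Matrix (Fin n) (Fin n) ℝ
  | 0 => 1
  | (k+1) => if l ≤ k then W k * prodW W l k else 1

lemma prodW_succ_of_le {n : ℕ} (W : ℕ → Matrix (Fin n) (Fin n) ℝ) {l k : ℕ} (h : l ≤ k) :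
    prodW W l (k+1) = W k * prodW W l k := by simp [prodW, h]

lemma prodW_self {n : ℕ} (W : ℕ → Matrix (Fin n) (Fin n) ℝ) (k : ℕ) :
    prodW W k k = 1 := by
  cases k with
  | zero => rfl
  | succ k => simp [prodW]

lemma matProdRange_eq_prodW {n : ℕ} (W : ℕ → Matrix (Fin n) (Fin n) ℝ) :
    ∀ k l, l ≤ k → matProdRange W l k = prodW W l (k+1) := by
  intro k
  induction k with
  | zero => intro l hl; interval_cases l
            simp [matProdRange, prodW, List.range_succ]
  | succ k ih =>
    intro l hl
    have hsplit : matProdRange W l (k+1) = W (k+1) * (((List.range (k + 1 - l)).map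
        fun i => W (k - i)).prod) := by
      have h1 : k + 1 + 1 - l = (k + 1 - l) + 1 := by omega
      rw [matProdRange, h1, List.range_succ_eq_map]
      simp [List.map_map, Function.comp_def]
    rcases Nat.lt_or_ge l (k+1) with h | h
    · have hlk : l ≤ k := by omega
      rw [hsplit]
      rw [prodW_succ_of_le W hl, ← ih l hlk, matProdRange]
    · have : l = k + 1 := by omega
      subst this
      rw [hsplit, prodW_succ_of_le W le_rfl, prodW_self]
      simp [matProdRange]

/-! ### Barrier lemmas -/

lemma logBarrier_of_pos {n p : ℕ} {c : Fin p → EuclideanSpace ℝ (Fin n) → ℝ}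
    {x : EuclideanSpace ℝ (Fin n)} (h : ∀ i, 0 < c i x) :
    logBarrier c x = ((-(∑ i, Real.log (c i x)) : ℝ) : EReal) := if_pos h

lemma barrier_seg {n p : ℕ} {c : Fin p → EuclideanSpace ℝ (Fin n) → ℝ}
    (hc_convex : ∀ i, ConvexOn ℝ Set.univ (fun x => -(c i x)))
    {x1 x2 : EuclideanSpace ℝ (Fin n)} (h1 : ∀ i, 0 < c i x1) (h2 : ∀ i, 0 < c i x2)
    {t : ℝ} (ht0 : 0 ≤ t) (ht1 : t ≤ 1) :
    (∀ i, 0 < c i ((1-t) • x1 + t • x2)) ∧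
      (-(∑ i, Real.log (c i ((1-t) • x1 + t • x2))) ≤
        (1-t) * (-(∑ i, Real.log (c i x1))) + t * (-(∑ i, Real.log (c i x2)))) := by
  have key : ∀ i, (1-t) * c i x1 + t * c i x2 ≤ c i ((1-t) • x1 + t • x2) := by
    intro i
    have h := (hc_convex i).2 (Set.mem_univ x1) (Set.mem_univ x2)
      (by linarith : (0:ℝ) ≤ 1 - t) ht0 (by ring)
    simp only [smul_eq_mul] at h
    linarith
  have pos : ∀ i, 0 < (1-t) * c i x1 + t * c i x2 := by
    intro i
    rcases lt_or_eq_of_le ht1 with h | h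
    · nlinarith [h1 i, h2 i, mul_nonneg ht0 (h2 i).le]
    · subst h; simpa using h2 i
  refine ⟨fun i => lt_of_lt_of_le (pos i) (key i), ?_⟩
  have hlog : ∀ i, (1-t) * Real.log (c i x1) + t * Real.log (c i x2) ≤
      Real.log (c i ((1-t) • x1 + t • x2)) := by
    intro i
    have hconc := strictConcaveOn_log_Ioi.concaveOn.2 (Set.mem_Ioi.2 (h1 i))
      (Set.mem_Ioi.2 (h2 i)) (by linarith : (0:ℝ) ≤ 1 - t) ht0 (by ring)
    simp only [smul_eq_mul] at hconc
    exact le_trans hconc (Real.log_le_log (pos i) (key i))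
  have hsum : ∑ i, ((1-t) * Real.log (c i x1) + t * Real.log (c i x2)) ≤
      ∑ i, Real.log (c i ((1-t) • x1 + t • x2)) :=
    Finset.sum_le_sum (fun i _ => hlog i)
  rw [Finset.sum_add_distrib, ← Finset.mul_sum, ← Finset.mul_sum] at hsum
  linarith

/-! ### Proximal operator lemmas -/

lemma prox_dom {n p : ℕ} {c : Fin p → EuclideanSpace ℝ (Fin n) → ℝ}
    (hc_int : ∃ x : EuclideanSpace ℝ (Fin n), ∀ i, 0 < c i x)
    {cst : ℝ} (hcst : 0 < cst)
    {Rk : EuclideanSpace ℝ (Fin n) → EuclideanSpace ℝ (Fin n)}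
    (hRk : ∀ z u : EuclideanSpace ℝ (Fin n), u ≠ Rk z →
      ((1 / 2 * ‖z - Rk z‖ ^ 2 : ℝ) : EReal) + ((cst : ℝ) : EReal) * logBarrier c (Rk z) <
        ((1 / 2 * ‖z - u‖ ^ 2 : ℝ) : EReal) + ((cst : ℝ) : EReal) * logBarrier c u) :
    ∀ z, ∀ i, 0 < c i (Rk z) := by
  intro z
  by_contra hcon
  have hbar : logBarrier c (Rk z) = ⊤ := if_neg hcon
  obtain ⟨x0, hx0⟩ := hc_int
  rcases eq_or_ne (Rk z) x0 with heq | hne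
  · exact hcon (by rw [heq]; exact hx0)
  · have hlt := hRk z x0 (Ne.symm hne)
    rw [logBarrier_of_pos hx0, hbar, EReal.coe_mul_top_of_pos hcst,
      EReal.coe_add_top] at hlt
    exact not_top_lt hlt

lemma prox_inner {n p : ℕ} {c : Fin p → EuclideanSpace ℝ (Fin n) → ℝ}
    (hc_convex : ∀ i, ConvexOn ℝ Set.univ (fun x => -(c i x)))
    {cst : ℝ} (hcst : 0 < cst)
    {Rk : EuclideanSpace ℝ (Fin n) → EuclideanSpace ℝ (Fin n)}
    (hRk : ∀ z u : EuclideanSpace ℝ (Fin n), u ≠ Rk z →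
      ((1 / 2 * ‖z - Rk z‖ ^ 2 : ℝ) : EReal) + ((cst : ℝ) : EReal) * logBarrier c (Rk z) <
        ((1 / 2 * ‖z - u‖ ^ 2 : ℝ) : EReal) + ((cst : ℝ) : EReal) * logBarrier c u)
    (hdom : ∀ z, ∀ i, 0 < c i (Rk z)) :
    ∀ z u : EuclideanSpace ℝ (Fin n), (∀ i, 0 < c i u) →
      ⟪z - Rk z, u - Rk z⟫ ≤
        cst * ((-(∑ i, Real.log (c i u))) - (-(∑ i, Real.log (c i (Rk z))))) := by
  intro z u hu
  rcases eq_or_ne u (Rk z) with he | hne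
  · simp [he]
  set b := u - Rk z with hb
  set B0 := -(∑ i, Real.log (c i (Rk z))) with hB0
  set Bu := -(∑ i, Real.log (c i u)) with hBu
  have hbn : ∀ t : ℝ, 0 < t → t ≤ 1 →
      ⟪z - Rk z, b⟫ ≤ t/2 * ‖b‖^2 + cst * (Bu - B0) := by
    intro t ht0 ht1
    set ut := (1-t) • (Rk z) + t • u with hut
    have hseg := barrier_seg hc_convex (hdom z) hu (le_of_lt ht0) ht1
    have hutsub : z - ut = (z - Rk z) - t • b := by rw [hut, hb]; module
    have hutne : ut ≠ Rk z := by
      intro hh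
      apply hne
      have h2 : t • b = 0 := by
        have : ut - Rk z = t • b := by rw [hut, hb]; module
        rw [hh] at this; simpa using this.symm
      have := smul_eq_zero.1 h2
      rcases this with h3 | h3
      · exact absurd h3 (ne_of_gt ht0)
      · rw [hb] at h3; rw [sub_eq_zero] at h3; exact h3
    have hlt := hRk z ut hutne
    rw [logBarrier_of_pos (hdom z), logBarrier_of_pos hseg.1] at hlt
    rw [← EReal.coe_mul, ← EReal.coe_mul, ← EReal.coe_add, ← EReal.coe_add,
      EReal.coe_lt_coe_iff] at hlt
    have hns : ‖z - ut‖^2 = ‖z - Rk z‖^2 - 2*(t*⟪z - Rk z, b⟫) + t^2*‖b‖^2 := by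
      rw [hutsub, norm_sub_sq_real, real_inner_smul_right, norm_smul]
      simp [mul_pow, sq_abs]
    have hBt := hseg.2
    have hgoal : t * ⟪z - Rk z, b⟫ < t * (t/2 * ‖b‖^2 + cst * (Bu - B0)) := by
      rw [hns] at hlt
      rw [← hB0, ← hBu] at hBt
      nlinarith [hBt, hlt]
    exact le_of_lt ((mul_lt_mul_iff_right₀ ht0).1 hgoal)
  by_contra hpos
  push_neg at hpos
  set X := ⟪z - Rk z, b⟫ - cst * (Bu - B0) with hX
  have hXpos : 0 < X := by rw [hX]; linarith
  have hd : (0:ℝ) < ‖b‖^2 + 1 := by positivity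
  set s := X / (‖b‖^2 + 1) with hs
  have hspos : 0 < s := div_pos hXpos hd
  have hsX : s * (‖b‖^2 + 1) = X := div_mul_cancel₀ X (ne_of_gt hd)
  have ht := hbn (min 1 s) (lt_min one_pos hspos) (min_le_left _ _)
  have htle : min 1 s ≤ s := min_le_right _ _
  have hb2 : (0:ℝ) ≤ ‖b‖^2 := sq_nonneg _
  have h1 : X ≤ (min 1 s)/2 * ‖b‖^2 := by rw [hX]; linarith
  have h2 : (min 1 s)/2 * ‖b‖^2 ≤ s/2 * ‖b‖^2 := by nlinarith
  nlinarith [hsX, hspos, hb2]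

lemma prox_S_nonexpansive {n p : ℕ} {c : Fin p → EuclideanSpace ℝ (Fin n) → ℝ}
    (hc_convex : ∀ i, ConvexOn ℝ Set.univ (fun x => -(c i x)))
    (hc_int : ∃ x : EuclideanSpace ℝ (Fin n), ∀ i, 0 < c i x)
    {cst : ℝ} (hcst : 0 < cst)
    {Rk : EuclideanSpace ℝ (Fin n) → EuclideanSpace ℝ (Fin n)}
    (hRk : ∀ z u : EuclideanSpace ℝ (Fin n), u ≠ Rk z →
      ((1 / 2 * ‖z - Rk z‖ ^ 2 : ℝ) : EReal) + ((cst : ℝ) : EReal) * logBarrier c (Rk z) <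
        ((1 / 2 * ‖z - u‖ ^ 2 : ℝ) : EReal) + ((cst : ℝ) : EReal) * logBarrier c u) :
    ∀ z1 z2 : EuclideanSpace ℝ (Fin n),
      ‖((2:ℝ) • Rk z1 - z1) - ((2:ℝ) • Rk z2 - z2)‖ ≤ ‖z1 - z2‖ := by
  have hdom := prox_dom hc_int hcst hRk
  intro z1 z2
  have h1 := prox_inner hc_convex hcst hRk hdom z1 (Rk z2) (hdom z2)
  have h2 := prox_inner hc_convex hcst hRk hdom z2 (Rk z1) (hdom z1)
  set du := Rk z1 - Rk z2 with hdu
  set dz := z1 - z2 with hdz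
  have hmono : ‖du‖^2 ≤ ⟪dz, du⟫ := by
    have e1 : Rk z2 - Rk z1 = -du := by rw [hdu]; module
    rw [e1, inner_neg_right] at h1
    have e3 : ⟪z2 - Rk z2, du⟫ - ⟪z1 - Rk z1, du⟫ = ⟪(z2 - Rk z2) - (z1 - Rk z1), du⟫ :=
      (inner_sub_left _ _ _).symm
    have e4 : (z2 - Rk z2) - (z1 - Rk z1) = -(dz - du) := by rw [hdz, hdu]; module
    rw [e4, inner_neg_left] at e3
    have e5 : ⟪du, du⟫ = ‖du‖^2 := real_inner_self_eq_norm_sq du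
    have e6 : ⟪dz - du, du⟫ = ⟪dz, du⟫ - ⟪du, du⟫ := inner_sub_left _ _ _
    have e7 : ⟪z2 - Rk z2, du⟫ = ⟪z2, du⟫ - ⟪Rk z2, du⟫ := inner_sub_left _ _ _
    linarith
  have hid : ((2:ℝ) • Rk z1 - z1) - ((2:ℝ) • Rk z2 - z2) = (2:ℝ) • du - dz := by
    rw [hdu, hdz]; module
  rw [hid]
  have hexp : ‖(2:ℝ) • du - dz‖^2 = 4*‖du‖^2 - 4*⟪dz, du⟫ + ‖dz‖^2 := by
    rw [norm_sub_sq_real, real_inner_smul_left, norm_smul, real_inner_comm]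
    simp [mul_pow]
    ring
  nlinarith [norm_nonneg ((2:ℝ) • du - dz), norm_nonneg dz, hexp, hmono]

/-! ### Euclidean/matrix helper lemmas -/

variable {n : ℕ}

lemma tel_mul_apply (A B : Matrix (Fin n) (Fin n) ℝ) (v : EuclideanSpace ℝ (Fin n)) :
    Matrix.toEuclideanLin (A * B) v = Matrix.toEuclideanLin A (Matrix.toEuclideanLin B v) := by
  simp [Matrix.toEuclideanLin_apply, mulVec_mulVec]

lemma tel_one (v : EuclideanSpace ℝ (Fin n)) :
    Matrix.toEuclideanLin (1 : Matrix (Fin n) (Fin n) ℝ) v = v := by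
  simp [Matrix.toEuclideanLin_apply, one_mulVec]

lemma tel_norm_le (A : Matrix (Fin n) (Fin n) ℝ) (v : EuclideanSpace ℝ (Fin n)) :
    ‖Matrix.toEuclideanLin A v‖ ≤ ‖A‖ * ‖v‖ := by
  rw [Matrix.l2_opNorm_def]
  exact ((Matrix.toEuclideanLin.trans LinearMap.toContinuousLinearMap) A).le_opNorm v

lemma norm_one_mat_le : ‖(1 : Matrix (Fin n) (Fin n) ℝ)‖ ≤ 1 := by
  rw [Matrix.cstar_norm_def, _root_.map_one]
  rw [ContinuousLinearMap.one_def]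
  exact ContinuousLinearMap.norm_id_le

lemma norm_equiv_symm_eq (u : Fin n → ℝ) :
    ‖(WithLp.equiv 2 (Fin n → ℝ)).symm u‖ = Real.sqrt (u ⬝ᵥ u) := by
  rw [EuclideanSpace.norm_eq]
  congr 1
  rw [dotProduct]
  apply Finset.sum_congr rfl
  intro i _
  simp [WithLp.equiv_symm_apply, Real.norm_eq_abs, sq, abs_mul_abs_self]

lemma orth_mulVec_norm {Q : Matrix (Fin n) (Fin n) ℝ} (hQ : Qᵀ * Q = 1) (u : Fin n → ℝ) :
    ‖(WithLp.equiv 2 (Fin n → ℝ)).symm (Q *ᵥ u)‖ = ‖(WithLp.equiv 2 (Fin n → ℝ)).symm u‖ := by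
  rw [norm_equiv_symm_eq, norm_equiv_symm_eq]
  congr 1
  calc (Q *ᵥ u) ⬝ᵥ (Q *ᵥ u) = ((Q *ᵥ u) ᵥ* Q) ⬝ᵥ u := dotProduct_mulVec _ _ _
    _ = (Qᵀ *ᵥ (Q *ᵥ u)) ⬝ᵥ u := by rw [mulVec_transpose]
    _ = ((Qᵀ * Q) *ᵥ u) ⬝ᵥ u := by rw [mulVec_mulVec]
    _ = u ⬝ᵥ u := by rw [hQ, one_mulVec]

lemma diag_mulVec_norm_le (e : Fin n → ℝ) {c0 : ℝ} (hc0 : 0 ≤ c0) (he : ∀ i, |e i| ≤ c0)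
    (u : Fin n → ℝ) :
    ‖(WithLp.equiv 2 (Fin n → ℝ)).symm (Matrix.diagonal e *ᵥ u)‖ ≤
      c0 * ‖(WithLp.equiv 2 (Fin n → ℝ)).symm u‖ := by
  rw [norm_equiv_symm_eq, norm_equiv_symm_eq]
  have h1 : (Matrix.diagonal e *ᵥ u) ⬝ᵥ (Matrix.diagonal e *ᵥ u) ≤ (c0*c0) * (u ⬝ᵥ u) := by
    rw [dotProduct, dotProduct, Finset.mul_sum]
    apply Finset.sum_le_sum
    intro i _
    rw [mulVec_diagonal]
    have h2 : |e i| * |e i| ≤ c0 * c0 := mul_self_le_mul_self (abs_nonneg _) (he i)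
    rw [abs_mul_abs_self] at h2
    nlinarith [mul_self_nonneg (u i), mul_self_nonneg (e i)]
  calc Real.sqrt ((Matrix.diagonal e *ᵥ u) ⬝ᵥ (Matrix.diagonal e *ᵥ u))
      ≤ Real.sqrt ((c0*c0) * (u ⬝ᵥ u)) := Real.sqrt_le_sqrt h1
    _ = c0 * Real.sqrt (u ⬝ᵥ u) := by
        rw [Real.sqrt_mul (by positivity), Real.sqrt_mul_self hc0]

end Aux

set_option maxHeartbeats 4000000 in
set_option synthInstance.maxHeartbeats 400000 in
theorem iRestNet_averaged {n p K : ℕ} (hK : 1 ≤ K) (α : ℝ)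
    (hα : α ∈ Set.Icc (1 / 2 : ℝ) 1) (y : EuclideanSpace ℝ (Fin n))
    (γ lam μ : ℕ → ℝ)
    (hγ : ∀ k, k ≤ K - 1 → 0 < γ k) (hlam : ∀ k, k ≤ K - 1 → 0 < lam k)
    (hμ : ∀ k, k ≤ K - 1 → 0 < μ k)
    (H D P : Matrix (Fin n) (Fin n) ℝ) (hP : Pᵀ * P = 1) (βH βD : Fin n → ℝ)
    (hH : Hᵀ * H = P * Matrix.diagonal βH * Pᵀ)
    (hD : Dᵀ * D = P * Matrix.diagonal βD * Pᵀ)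
    (c : Fin p → EuclideanSpace ℝ (Fin n) → ℝ)
    (hc_convex : ∀ i, ConvexOn ℝ Set.univ (fun x => -(c i x)))
    (hc_lsc : ∀ i, LowerSemicontinuous (fun x => -(c i x)))
    (hc_int : ∃ x : EuclideanSpace ℝ (Fin n), ∀ i, 0 < c i x)
    (W : ℕ → Matrix (Fin n) (Fin n) ℝ)
    (hW : ∀ k, W k = 1 - γ k • (Hᵀ * H + lam k • (Dᵀ * D)))
    (A R : ℕ → EuclideanSpace ℝ (Fin n) → EuclideanSpace ℝ (Fin n))
    (hA : ∀ k x, A k x = Matrix.toEuclideanLin (W k) x +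
      γ k • Matrix.toEuclideanLin Hᵀ y)
    (hR : ∀ k, k ≤ K - 1 → ∀ z u : EuclideanSpace ℝ (Fin n), u ≠ R k z →
      ((1 / 2 * ‖z - R k z‖ ^ 2 : ℝ) : EReal) +
          ((γ k * μ k : ℝ) : EReal) * logBarrier c (R k z) <
        ((1 / 2 * ‖z - u‖ ^ 2 : ℝ) : EReal) +
          ((γ k * μ k : ℝ) : EReal) * logBarrier c u)
    (βm βp : ℝ)
    (hβm : (∃ v : Fin n → ℝ, v ≠ 0 ∧ (matProdRange W 0 (K - 1)).mulVec v = βm • v) ∧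
      ∀ β : ℝ, (∃ v : Fin n → ℝ, v ≠ 0 ∧ (matProdRange W 0 (K - 1)).mulVec v = β • v) →
        βm ≤ β)
    (hβp : (∃ v : Fin n → ℝ, v ≠ 0 ∧ (matProdRange W 0 (K - 1)).mulVec v = βp • v) ∧
      ∀ β : ℝ, (∃ v : Fin n → ℝ, v ≠ 0 ∧ (matProdRange W 0 (K - 1)).mulVec v = β • v) →
        β ≤ βp)
    (θ : ℕ → ℝ) (hθ0 : θ 0 = 1)
    (hθ : ∀ k, k ≤ K - 1 →
      θ (k + 1) = ∑ l ∈ Finset.range (k + 1), θ l * ‖matProdRange W l k‖)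
    (hcond :
      (βp + βm ≤ 0 ∧ θ K ≤ (2 : ℝ) ^ (K - 1) * (2 * α - 1)) ∨
      (0 ≤ βp + βm ∧ βp + βm ≤ (2 : ℝ) ^ (K + 1) * (1 - α) ∧
        2 * θ K ≤ βp + βm + (2 : ℝ) ^ K * (2 * α - 1)) ∨
      ((2 : ℝ) ^ (K + 1) * (1 - α) ≤ βp + βm ∧ θ K ≤ (2 : ℝ) ^ (K - 1))) :
    ∃ Rne : EuclideanSpace ℝ (Fin n) → EuclideanSpace ℝ (Fin n),
      (∀ x y' : EuclideanSpace ℝ (Fin n), ‖Rne x - Rne y'‖ ≤ ‖x - y'‖) ∧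
      ∀ x : EuclideanSpace ℝ (Fin n),
        iterLayers R A K x = (1 - α) • x + α • Rne x := by
  obtain ⟨hα1, hα2⟩ := hα
  have hα0 : (0:ℝ) < α := by linarith
  obtain ⟨K', rfl⟩ : ∃ K', K = K' + 1 := ⟨K - 1, by omega⟩
  simp only [Nat.add_sub_cancel] at hγ hlam hμ hR hβm hβp hθ hcond
  -- θ is nonnegative
  have hθnn : ∀ l, l ≤ K' + 1 → 0 ≤ θ l := by
    intro l
    induction l using Nat.strong_induction_on with
    | _ l ih =>
      intro hl
      match l with
      | 0 => rw [hθ0]; norm_num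
      | m+1 =>
        rw [hθ m (by omega)]
        apply Finset.sum_nonneg
        intro i hi
        have hi' : i < m + 1 := Finset.mem_range.mp hi
        exact mul_nonneg (ih i (by omega) (by omega)) (norm_nonneg _)
  -- nonexpansiveness of the reflected prox operators
  have hS : ∀ k, k ≤ K' → ∀ z1 z2 : EuclideanSpace ℝ (Fin n),
      ‖((2:ℝ) • R k z1 - z1) - ((2:ℝ) • R k z2 - z2)‖ ≤ ‖z1 - z2‖ :=
    fun k hk => prox_S_nonexpansive hc_convex hc_int
      (mul_pos (hγ k hk) (hμ k hk)) (hR k hk)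
  -- the main structural induction
  have key : ∀ k, k ≤ K' + 1 → ∀ (C : Matrix (Fin n) (Fin n) ℝ)
      (x x' : EuclideanSpace ℝ (Fin n)),
      ‖Matrix.toEuclideanLin C (iterLayers R A k x - iterLayers R A k x'
          - ((1:ℝ)/2)^k • Matrix.toEuclideanLin (prodW W 0 k) (x - x'))‖ ≤
        ((1:ℝ)/2)^k * (∑ m ∈ Finset.range k, θ (m+1) * ‖C * prodW W (m+1) k‖) * ‖x - x'‖ := by
    intro k
    induction k with
    | zero =>
      intro _ C x x'
      have h1 : prodW W 0 0 = 1 := rfl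
      rw [h1]
      simp [iterLayers, tel_one]
    | succ k ih =>
      intro hk1 C x x'
      have hkK : k ≤ K' + 1 := by omega
      have hk1' : k ≤ K' := by omega
      set Tx := iterLayers R A k x with hTx
      set Tx' := iterLayers R A k x' with hTxp
      set z1 := A k Tx with hz1
      set z2 := A k Tx' with hz2
      set ρ := Tx - Tx' - ((1:ℝ)/2)^k • Matrix.toEuclideanLin (prodW W 0 k) (x - x') with hρ
      set Δ := ((2:ℝ) • R k z1 - z1) - ((2:ℝ) • R k z2 - z2) with hΔ
      have hz12 : z1 - z2 = Matrix.toEuclideanLin (W k) (Tx - Tx') := by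
        rw [hz1, hz2, hA k Tx, hA k Tx', map_sub]
        abel
      have hmul : Matrix.toEuclideanLin (prodW W 0 (k+1)) (x - x')
          = Matrix.toEuclideanLin (W k) (Matrix.toEuclideanLin (prodW W 0 k) (x - x')) := by
        rw [prodW_succ_of_le W (Nat.zero_le k), tel_mul_apply]
      have hTsub : Tx - Tx' = ρ + ((1:ℝ)/2)^k • Matrix.toEuclideanLin (prodW W 0 k) (x - x') := by
        rw [hρ]; module
      have hu1 : iterLayers R A (k+1) x = R k z1 := rfl
      have hu2 : iterLayers R A (k+1) x' = R k z2 := rfl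
      have hsplit : R k z1 - R k z2 = ((1:ℝ)/2) • (z1 - z2) + ((1:ℝ)/2) • Δ := by
        rw [hΔ]; module
      have hiter : iterLayers R A (k+1) x - iterLayers R A (k+1) x'
          - ((1:ℝ)/2)^(k+1) • Matrix.toEuclideanLin (prodW W 0 (k+1)) (x - x')
          = ((1:ℝ)/2) • Matrix.toEuclideanLin (W k) ρ + ((1:ℝ)/2) • Δ := by
        rw [hu1, hu2, hsplit, hz12, hTsub, map_add, _root_.map_smul, ← hmul, pow_succ]
        module
      have happ : Matrix.toEuclideanLin C (iterLayers R A (k+1) x - iterLayers R A (k+1) x'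
          - ((1:ℝ)/2)^(k+1) • Matrix.toEuclideanLin (prodW W 0 (k+1)) (x - x'))
          = ((1:ℝ)/2) • Matrix.toEuclideanLin (C * W k) ρ
            + ((1:ℝ)/2) • Matrix.toEuclideanLin C Δ := by
        rw [hiter, map_add, _root_.map_smul, _root_.map_smul, tel_mul_apply]
      have hθk : θ (k+1) = (∑ m ∈ Finset.range k, θ (m+1) * ‖W k * prodW W (m+1) k‖)
          + ‖prodW W 0 (k+1)‖ := by
        rw [hθ k hk1', Finset.sum_range_succ', hθ0, one_mul]
        congr 1
        · apply Finset.sum_congr rfl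
          intro m hm
          have hm' : m < k := Finset.mem_range.mp hm
          rw [matProdRange_eq_prodW W k (m+1) (by omega), prodW_succ_of_le W (by omega)]
        · rw [matProdRange_eq_prodW W k 0 (Nat.zero_le k)]
      have hΔle : ‖Δ‖ ≤ ((1:ℝ)/2)^k * θ (k+1) * ‖x - x'‖ := by
        have h1 : ‖Δ‖ ≤ ‖z1 - z2‖ := hS k hk1' z1 z2
        have h2 : z1 - z2 = Matrix.toEuclideanLin (W k) ρ
            + ((1:ℝ)/2)^k • Matrix.toEuclideanLin (prodW W 0 (k+1)) (x - x') := by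
          rw [hz12, hTsub, map_add, _root_.map_smul, hmul]
        have h3 : ‖z1 - z2‖ ≤
            ((1:ℝ)/2)^k * (∑ m ∈ Finset.range k, θ (m+1) * ‖W k * prodW W (m+1) k‖) * ‖x - x'‖
            + ((1:ℝ)/2)^k * (‖prodW W 0 (k+1)‖ * ‖x - x'‖) := by
          rw [h2]
          refine le_trans (norm_add_le _ _) (add_le_add ?_ ?_)
          · exact ih hkK (W k) x x'
          · rw [norm_smul, Real.norm_eq_abs, abs_of_pos (by positivity)]
            exact mul_le_mul_of_nonneg_left (tel_norm_le _ _) (by positivity)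
        calc ‖Δ‖ ≤ _ := le_trans h1 h3
          _ = ((1:ℝ)/2)^k * θ (k+1) * ‖x - x'‖ := by rw [hθk]; ring
      have hCW := ih hkK (C * W k) x x'
      have hC : ‖Matrix.toEuclideanLin C Δ‖ ≤ ‖C‖ * (((1:ℝ)/2)^k * θ (k+1) * ‖x - x'‖) :=
        le_trans (tel_norm_le C Δ) (mul_le_mul_of_nonneg_left hΔle (norm_nonneg C))
      have hsum : ∑ m ∈ Finset.range (k+1), θ (m+1) * ‖C * prodW W (m+1) (k+1)‖
          = (∑ m ∈ Finset.range k, θ (m+1) * ‖(C * W k) * prodW W (m+1) k‖)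
            + θ (k+1) * ‖C‖ := by
        rw [Finset.sum_range_succ, prodW_self, mul_one]
        congr 1
        apply Finset.sum_congr rfl
        intro m hm
        have hm' : m < k := Finset.mem_range.mp hm
        rw [prodW_succ_of_le W (by omega), mul_assoc]
      rw [happ, hsum]
      refine le_trans (norm_add_le _ _) ?_
      rw [norm_smul, norm_smul, Real.norm_eq_abs, abs_of_pos (by norm_num : (0:ℝ) < 1/2)]
      rw [pow_succ]
      nlinarith [hCW, hC, norm_nonneg (Matrix.toEuclideanLin (C * W k) ρ),
        norm_nonneg (Matrix.toEuclideanLin C Δ)]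
  -- diagonalization
  have hPPt : P * Pᵀ = 1 := mul_eq_one_comm.mp hP
  set w : ℕ → Fin n → ℝ := fun k i => 1 - γ k * (βH i + lam k * βD i) with hw
  have hWdiag : ∀ k, W k = P * Matrix.diagonal (w k) * Pᵀ := by
    intro k
    rw [hW k, hH, hD]
    have hd : Matrix.diagonal (w k)
        = 1 - γ k • (Matrix.diagonal βH + lam k • Matrix.diagonal βD) := by
      ext i j
      by_cases hij : i = j
      · subst hij
        simp [hw, Matrix.diagonal_apply_eq, Matrix.one_apply_eq]
        ring
      · simp [Matrix.diagonal_apply_ne _ hij, Matrix.one_apply_ne hij]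
    rw [hd]
    simp only [mul_sub, sub_mul, mul_one, mul_add, add_mul, mul_smul_comm, smul_mul_assoc,
      hPPt, Matrix.mul_assoc]
  have hMdiag : ∀ k, prodW W 0 k
      = P * Matrix.diagonal (fun i => ∏ j ∈ Finset.range k, w j i) * Pᵀ := by
    intro k
    induction k with
    | zero =>
      show (1 : Matrix (Fin n) (Fin n) ℝ) = _
      have : (fun i : Fin n => ∏ j ∈ Finset.range 0, w j i) = fun _ => (1:ℝ) := by
        funext i; simp
      rw [this, ← Matrix.diagonal_one]
      rw [Matrix.diagonal_one, Matrix.mul_one, hPPt]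
    | succ k ih =>
      rw [prodW_succ_of_le W (Nat.zero_le k), ih, hWdiag k]
      have hcomb : ∀ (a b : Fin n → ℝ),
          (P * Matrix.diagonal a * Pᵀ) * (P * Matrix.diagonal b * Pᵀ)
            = P * (Matrix.diagonal a * Matrix.diagonal b) * Pᵀ := by
        intro a b
        calc (P * Matrix.diagonal a * Pᵀ) * (P * Matrix.diagonal b * Pᵀ)
            = P * (Matrix.diagonal a * ((Pᵀ * P) * (Matrix.diagonal b * Pᵀ))) := by
              simp only [Matrix.mul_assoc]
          _ = P * (Matrix.diagonal a * (Matrix.diagonal b * Pᵀ)) := by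
              rw [hP, Matrix.one_mul]
          _ = P * (Matrix.diagonal a * Matrix.diagonal b) * Pᵀ := by
              simp only [Matrix.mul_assoc]
      rw [hcomb, Matrix.diagonal_mul_diagonal]
      all_goals
        refine congrArg (fun M => P * M * Pᵀ) (congrArg Matrix.diagonal (funext fun i => ?_))
        show w k i * ∏ j ∈ Finset.range k, w j i = ∏ j ∈ Finset.range (k+1), w j i
        rw [Finset.prod_range_succ, mul_comm]
  set d : Fin n → ℝ := fun i => ∏ j ∈ Finset.range (K'+1), w j i with hdef
  set Mmat := prodW W 0 (K'+1) with hMmat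
  have hMd : Mmat = P * Matrix.diagonal d * Pᵀ := hMdiag (K'+1)
  have hbridge : matProdRange W 0 K' = Mmat := by
    rw [matProdRange_eq_prodW W K' 0 (Nat.zero_le _)]
  -- eigenvalue facts
  have heig : ∀ i, Mmat *ᵥ (P *ᵥ (Pi.single i 1 : Fin n → ℝ)) = d i • (P *ᵥ (Pi.single i 1 : Fin n → ℝ)) := by
    intro i
    have hsplit : ∀ u : Fin n → ℝ, (P * Matrix.diagonal d * Pᵀ) *ᵥ u
        = P *ᵥ (Matrix.diagonal d *ᵥ (Pᵀ *ᵥ u)) := by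
      intro u
      rw [mulVec_mulVec, mulVec_mulVec, Matrix.mul_assoc]
    have h1 : Pᵀ *ᵥ (P *ᵥ (Pi.single i 1 : Fin n → ℝ)) = (Pi.single i 1 : Fin n → ℝ) := by
      rw [mulVec_mulVec, hP, one_mulVec]
    rw [hMd, hsplit, h1, Matrix.diagonal_mulVec_single, mul_one]
    have h2 : (Pi.single i (d i) : Fin n → ℝ) = d i • (Pi.single i 1 : Fin n → ℝ) := by
      funext j
      by_cases hj : j = i
      · subst hj; simp
      · simp [Pi.single_eq_of_ne hj]
    rw [h2, mulVec_smul]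
  have hv0 : ∀ i : Fin n, (P *ᵥ (Pi.single i 1 : Fin n → ℝ)) ≠ 0 := by
    intro i h
    have h2 := congrArg (fun u => Pᵀ *ᵥ u) h
    simp only [mulVec_mulVec, hP, one_mulVec, mulVec_zero] at h2
    have := congrFun h2 i
    simp at this
  have hdlb : ∀ i, βm ≤ d i := by
    intro i
    exact hβm.2 (d i) ⟨_, hv0 i, by rw [hbridge]; exact heig i⟩
  have hdub : ∀ i, d i ≤ βp := by
    intro i
    exact hβp.2 (d i) ⟨_, hv0 i, by rw [hbridge]; exact heig i⟩
  have hβmβp : βm ≤ βp := hβm.2 βp hβp.1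
  -- eigenvalues bounded by operator norm
  have hnorm_ev : ∀ β : ℝ, (∃ v : Fin n → ℝ, v ≠ 0 ∧ (matProdRange W 0 K').mulVec v = β • v)
      → |β| ≤ ‖Mmat‖ := by
    rintro β ⟨v, hv, hev⟩
    rw [hbridge] at hev
    set v' : EuclideanSpace ℝ (Fin n) := (WithLp.equiv 2 (Fin n → ℝ)).symm v with hv'
    have hvpos : (0:ℝ) < ‖v'‖ := by
      rw [norm_pos_iff]
      intro h0
      apply hv
      have := congrArg (WithLp.equiv 2 (Fin n → ℝ)) h0
      simpa [hv'] using this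
    have h2 : ‖(WithLp.equiv 2 (Fin n → ℝ)).symm (Mmat *ᵥ v)‖ ≤ ‖Mmat‖ * ‖v'‖ :=
      Matrix.l2_opNorm_mulVec Mmat v'
    rw [hev] at h2
    have h3 : ‖(WithLp.equiv 2 (Fin n → ℝ)).symm (β • v)‖ = |β| * ‖v'‖ := by
      have : (WithLp.equiv 2 (Fin n → ℝ)).symm (β • v) = β • v' := rfl
      rw [this, norm_smul, Real.norm_eq_abs]
    rw [h3] at h2
    exact le_of_mul_le_mul_right h2 hvpos
  have hMβp : |βp| ≤ ‖Mmat‖ := hnorm_ev βp hβp.1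
  have hMβm : |βm| ≤ ‖Mmat‖ := hnorm_ev βm hβm.1
  -- spectral norm bound for the linear part
  set aK : ℝ := ((1:ℝ)/2)^(K'+1) with haK
  have haK0 : (0:ℝ) < aK := by positivity
  set c0 : ℝ := max |aK * βp - (1 - α)| |aK * βm - (1 - α)| with hc0
  have hc00 : 0 ≤ c0 := le_trans (abs_nonneg _) (le_max_left _ _)
  have he_abs : ∀ i, |aK * d i - (1 - α)| ≤ c0 := by
    intro i
    have h1 : aK * βm ≤ aK * d i := mul_le_mul_of_nonneg_left (hdlb i) haK0.le
    have h2 : aK * d i ≤ aK * βp := mul_le_mul_of_nonneg_left (hdub i) haK0.le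
    rw [abs_le]
    constructor
    · have ha := neg_abs_le (aK * βm - (1 - α))
      have hb := le_max_right |aK * βp - (1 - α)| |aK * βm - (1 - α)|
      rw [hc0]; linarith
    · have ha := le_abs_self (aK * βp - (1 - α))
      have hb := le_max_left |aK * βp - (1 - α)| |aK * βm - (1 - α)|
      rw [hc0]; linarith
  have hNmat : aK • Mmat - (1 - α) • (1 : Matrix (Fin n) (Fin n) ℝ)
      = P * Matrix.diagonal (fun i => aK * d i - (1 - α)) * Pᵀ := by
    rw [hMd]
    have hdlin : Matrix.diagonal (fun i => aK * d i - (1 - α))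
        = aK • Matrix.diagonal d - (1 - α) • (1 : Matrix (Fin n) (Fin n) ℝ) := by
      rw [← Matrix.diagonal_one]
      ext i j
      by_cases hij : i = j
      · subst hij
        simp [Matrix.sub_apply, Matrix.smul_apply, Matrix.diagonal_apply_eq]
      · simp [Matrix.sub_apply, Matrix.smul_apply, Matrix.diagonal_apply_ne _ hij,
          Matrix.one_apply_ne hij]
    rw [hdlin, mul_sub, sub_mul, mul_smul_comm, smul_mul_assoc, mul_smul_comm, smul_mul_assoc,
      Matrix.mul_one, hPPt]
  have hPt : (Pᵀ)ᵀ * Pᵀ = 1 := by rw [Matrix.transpose_transpose]; exact hPPt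
  have hNap : ∀ v : EuclideanSpace ℝ (Fin n),
      ‖aK • Matrix.toEuclideanLin Mmat v - (1 - α) • v‖ ≤ c0 * ‖v‖ := by
    intro v
    have h0 : aK • Matrix.toEuclideanLin Mmat v - (1 - α) • v
        = Matrix.toEuclideanLin (aK • Mmat - (1 - α) • (1 : Matrix (Fin n) (Fin n) ℝ)) v := by
      rw [map_sub, _root_.map_smul, _root_.map_smul, LinearMap.sub_apply, LinearMap.smul_apply,
        LinearMap.smul_apply, tel_one]
    rw [h0, hNmat, Matrix.toEuclideanLin_apply]
    have hsplit : (P * Matrix.diagonal (fun i => aK * d i - (1 - α)) * Pᵀ) *ᵥ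
        (WithLp.equiv 2 (Fin n → ℝ)) v
        = P *ᵥ (Matrix.diagonal (fun i => aK * d i - (1 - α)) *ᵥ
            (Pᵀ *ᵥ (WithLp.equiv 2 (Fin n → ℝ)) v)) := by
      rw [mulVec_mulVec, mulVec_mulVec, Matrix.mul_assoc]
    rw [show v.ofLp = (WithLp.equiv 2 (Fin n → ℝ)) v from rfl, hsplit, ← WithLp.equiv_symm_apply,
      orth_mulVec_norm hP]
    refine le_trans (diag_mulVec_norm_le _ hc00 he_abs _) ?_
    rw [orth_mulVec_norm hPt, Equiv.symm_apply_apply]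
  -- θ decomposition at K
  have hθKdecomp : θ (K'+1)
      = (∑ m ∈ Finset.range K', θ (m+1) * ‖prodW W (m+1) (K'+1)‖) + ‖Mmat‖ := by
    rw [hθ K' le_rfl, Finset.sum_range_succ', hθ0, one_mul]
    congr 1
    · apply Finset.sum_congr rfl
      intro m hm
      have hm' : m < K' := Finset.mem_range.mp hm
      rw [matProdRange_eq_prodW W K' (m+1) (by omega)]
    · rw [hbridge]
  have hmθ : ‖Mmat‖ ≤ θ (K'+1) := by
    rw [hθKdecomp]
    have : 0 ≤ ∑ m ∈ Finset.range K', θ (m+1) * ‖prodW W (m+1) (K'+1)‖ :=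
      Finset.sum_nonneg fun m hm =>
        mul_nonneg (hθnn (m+1) (by have := Finset.mem_range.mp hm; omega)) (norm_nonneg _)
    linarith
  -- main Lipschitz estimate
  have main : ∀ x x' : EuclideanSpace ℝ (Fin n),
      ‖iterLayers R A (K'+1) x - iterLayers R A (K'+1) x' - (1 - α) • (x - x')‖
        ≤ α * ‖x - x'‖ := by
    intro x x'
    have hkey := key (K'+1) le_rfl 1 x x'
    rw [tel_one] at hkey
    have hsum1 : ∑ m ∈ Finset.range (K'+1), θ (m+1) * ‖(1:Matrix (Fin n) (Fin n) ℝ) *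
        prodW W (m+1) (K'+1)‖ = ∑ m ∈ Finset.range (K'+1), θ (m+1) * ‖prodW W (m+1) (K'+1)‖ := by
      apply Finset.sum_congr rfl
      intro m _
      rw [Matrix.one_mul]
    rw [hsum1] at hkey
    have hsum2 : ∑ m ∈ Finset.range (K'+1), θ (m+1) * ‖prodW W (m+1) (K'+1)‖
        ≤ 2 * θ (K'+1) - ‖Mmat‖ := by
      rw [Finset.sum_range_succ, prodW_self]
      have h1 : θ (K'+1) * ‖(1 : Matrix (Fin n) (Fin n) ℝ)‖ ≤ θ (K'+1) * 1 :=
        mul_le_mul_of_nonneg_left norm_one_mat_le (hθnn (K'+1) le_rfl)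
      have h2 : ∑ m ∈ Finset.range K', θ (m+1) * ‖prodW W (m+1) (K'+1)‖
          = θ (K'+1) - ‖Mmat‖ := by linarith [hθKdecomp]
      linarith
    have hρle : ‖iterLayers R A (K'+1) x - iterLayers R A (K'+1) x'
        - aK • Matrix.toEuclideanLin Mmat (x - x')‖
        ≤ aK * (2 * θ (K'+1) - ‖Mmat‖) * ‖x - x'‖ := by
      refine le_trans hkey ?_
      exact mul_le_mul_of_nonneg_right (mul_le_mul_of_nonneg_left hsum2 haK0.le) (norm_nonneg _)
    have hfinal : aK * (2 * θ (K'+1) - ‖Mmat‖) + c0 ≤ α := by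
      have haK2 : aK * 2^(K'+1) = 1 := by
        rw [haK, ← mul_pow]
        norm_num
      have haK2' : aK * 2^K' = 1/2 := by
        linear_combination (1/2 : ℝ) * haK2
      have haK22 : aK * 2^(K'+1+1) = 2 := by
        linear_combination (2:ℝ) * haK2
      have f1 : aK * βm ≤ aK * βp := mul_le_mul_of_nonneg_left hβmβp haK0.le
      have f2 : aK * βp ≤ aK * ‖Mmat‖ :=
        mul_le_mul_of_nonneg_left (le_trans (le_abs_self βp) hMβp) haK0.le
      have f3 : aK * (-‖Mmat‖) ≤ aK * βm :=
        mul_le_mul_of_nonneg_left (by linarith [neg_abs_le βm]) haK0.le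
      have f3' : -(aK * ‖Mmat‖) ≤ aK * βm := by nlinarith
      have f4 : aK * ‖Mmat‖ ≤ aK * θ (K'+1) := mul_le_mul_of_nonneg_left hmθ haK0.le
      have f5 : 0 ≤ aK * ‖Mmat‖ := mul_nonneg haK0.le (norm_nonneg _)
      have hc0le : c0 ≤ α - (aK * (2 * θ (K'+1) - ‖Mmat‖)) → _ := fun h => le_trans h le_rfl
      have hexp : aK * (2 * θ (K'+1) - ‖Mmat‖) = 2*(aK * θ (K'+1)) - aK * ‖Mmat‖ := by ring
      have hgoal : c0 ≤ α - (2*(aK * θ (K'+1)) - aK * ‖Mmat‖) := by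
        rcases hcond with ⟨hc1, hc2⟩ | ⟨hc1, hc2, hc3⟩ | ⟨hc1, hc2⟩
        · have g1 : aK * βp + aK * βm ≤ 0 := by nlinarith
          have g2 : aK * θ (K'+1) ≤ (1/2)*(2*α-1) := by
            have h := mul_le_mul_of_nonneg_left hc2 haK0.le
            have he : aK * ((2:ℝ)^K' * (2*α-1)) = (1/2)*(2*α-1) := by
              linear_combination (2*α-1) * haK2'
            linarith
          apply max_le <;> rw [abs_le] <;> constructor <;> nlinarith
        · have g1 : 0 ≤ aK * βp + aK * βm := by nlinarith
          have g2 : aK * βp + aK * βm ≤ 2*(1-α) := by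
            have h := mul_le_mul_of_nonneg_left hc2 haK0.le
            have he : aK * ((2:ℝ)^(K'+1+1) * (1-α)) = 2*(1-α) := by
              linear_combination (2*(1-α)) * haK2
            nlinarith
          have g3 : 2*(aK * θ (K'+1)) ≤ aK * βp + aK * βm + (2*α-1) := by
            have h := mul_le_mul_of_nonneg_left hc3 haK0.le
            have he : aK * (βp + βm + (2:ℝ)^(K'+1) * (2*α-1))
                = aK * βp + aK * βm + (2*α-1) := by
              linear_combination (2*α-1) * haK2
            nlinarith
          apply max_le <;> rw [abs_le] <;> constructor <;> nlinarith
        · have g1 : 2*(1-α) ≤ aK * βp + aK * βm := by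
            have h := mul_le_mul_of_nonneg_left hc1 haK0.le
            have he : aK * ((2:ℝ)^(K'+1+1) * (1-α)) = 2*(1-α) := by
              linear_combination (2*(1-α)) * haK2
            nlinarith
          have g2 : aK * θ (K'+1) ≤ 1/2 := by
            have h := mul_le_mul_of_nonneg_left hc2 haK0.le
            linarith [haK2']
          apply max_le <;> rw [abs_le] <;> constructor <;> nlinarith
      rw [hexp]
      linarith
    calc ‖iterLayers R A (K'+1) x - iterLayers R A (K'+1) x' - (1 - α) • (x - x')‖
        = ‖(iterLayers R A (K'+1) x - iterLayers R A (K'+1) x'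
            - aK • Matrix.toEuclideanLin Mmat (x - x'))
          + (aK • Matrix.toEuclideanLin Mmat (x - x') - (1 - α) • (x - x'))‖ := by
          congr 1
          abel
      _ ≤ ‖iterLayers R A (K'+1) x - iterLayers R A (K'+1) x'
            - aK • Matrix.toEuclideanLin Mmat (x - x')‖
          + ‖aK • Matrix.toEuclideanLin Mmat (x - x') - (1 - α) • (x - x')‖ := norm_add_le _ _
      _ ≤ aK * (2 * θ (K'+1) - ‖Mmat‖) * ‖x - x'‖ + c0 * ‖x - x'‖ :=
          add_le_add hρle (hNap (x - x'))
      _ = (aK * (2 * θ (K'+1) - ‖Mmat‖) + c0) * ‖x - x'‖ := by ring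
      _ ≤ α * ‖x - x'‖ := mul_le_mul_of_nonneg_right hfinal (norm_nonneg _)
  -- construct the nonexpansive operator
  refine ⟨fun x => α⁻¹ • (iterLayers R A (K'+1) x - (1 - α) • x), ?_, ?_⟩
  · intro x x'
    have h := main x x'
    have hid : α⁻¹ • (iterLayers R A (K'+1) x - (1 - α) • x)
        - α⁻¹ • (iterLayers R A (K'+1) x' - (1 - α) • x')
        = α⁻¹ • (iterLayers R A (K'+1) x - iterLayers R A (K'+1) x' - (1 - α) • (x - x')) := by
      module
    rw [hid, norm_smul, Real.norm_eq_abs, abs_of_pos (inv_pos.2 hα0)]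
    calc α⁻¹ * ‖iterLayers R A (K'+1) x - iterLayers R A (K'+1) x' - (1 - α) • (x - x')‖
        ≤ α⁻¹ * (α * ‖x - x'‖) := mul_le_mul_of_nonneg_left h (by positivity)
      _ = ‖x - x'‖ := by field_simp
  · intro x
    rw [smul_smul, mul_inv_cancel₀ (ne_of_gt hα0), one_smul]
    abel
end
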